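/- arXiv:2102.02920 — 5 statements merged into one kernel-verified Lean document; each statement's English description precedes it below -/
import Mathlib

section
/- For all integers i, j ≥ 0, the number of Schröder paths from (0, 2i) to (2j+1, 2j+1) equals the coefficient of u^i v^{2j+1} in the formal power series expansion over ℚ of 1/(1 − v − uv − uv²). -/
noncomputable section

/-- A single Schröder step: up `(1,1)`, down `(1,-1)` or horizontal `(2,0)`. -/
def SchroderStep (a b : ℤ × ℤ) : Prop :=
  b - a = (1, 1) ∨ b - a = (1, -1) ∨ b - a = (2, 0)

/-- A Schröder path: consecutive differences are Schröder steps. -/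
def IsSchroderPath (p : List (ℤ × ℤ)) : Prop := p.Chain' SchroderStep

/-- The set of Schröder paths from `a` to `b`. -/
def SchroderPaths (a b : ℤ × ℤ) : Set (List (ℤ × ℤ)) :=
  {p | IsSchroderPath p ∧ p.head? = some a ∧ p.getLast? = some b}

/-- `M i j` = number of Schröder paths from `(0, 2i)` to `(2j+1, 2j+1)`. -/
def M (i j : ℕ) : ℕ :=
  Nat.card (SchroderPaths (0, 2 * (i : ℤ)) (2 * (j : ℤ) + 1, 2 * (j : ℤ) + 1))

/-- Formal power series in two variables `u, v` over `ℚ`. -/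
abbrev PS : Type := MvPowerSeries (Fin 2) ℚ

def uu : PS := MvPowerSeries.X 0
def vv : PS := MvPowerSeries.X 1

/-- Coefficient of `u^i v^j`. -/
def cf (i j : ℕ) (f : PS) : ℚ :=
  MvPowerSeries.coeff (Finsupp.single 0 i + Finsupp.single 1 j) f


def SS : Set (ℤ × ℤ) := {(1,1), (1,-1), (2,0)}

def Words (t : ℤ × ℤ) : Set (List (ℤ × ℤ)) := {w | (∀ s ∈ w, s ∈ SS) ∧ w.sum = t}

def C (t : ℤ × ℤ) : ℕ := (Words t).ncard

def N : ℕ → ℕ → ℕ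
  | 0, 0 => 1
  | _+1, 0 => 0
  | 0, m+1 => N 0 m
  | i+1, 1 => N (i+1) 0 + N i 0
  | i+1, m+2 => N (i+1) (m+1) + N i (m+1) + N i m

lemma mem_SS {s : ℤ × ℤ} : s ∈ SS ↔ s = (1,1) ∨ s = (1,-1) ∨ s = (2,0) := by
  simp [SS]

lemma sum_bounds : ∀ w : List (ℤ × ℤ), (∀ s ∈ w, s ∈ SS) →
    (w.length : ℤ) ≤ w.sum.1 ∧ w.sum.2 ≤ w.sum.1 ∧ -w.sum.1 ≤ w.sum.2
  | [], _ => by simp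
  | s :: w, h => by
    have hs := mem_SS.1 (h s (by simp))
    have ih := sum_bounds w (fun x hx => h x (by simp [hx]))
    rcases hs with rfl | rfl | rfl <;>
      simp only [List.sum_cons, List.length_cons, Prod.fst_add, Prod.snd_add] <;>
      push_cast <;> omega

lemma words_finite (t : ℤ × ℤ) : (Words t).Finite := by
  have hSS : SS.Finite := by
    simp only [SS]; exact (Set.finite_singleton _).insert _ |>.insert _
  have : Finite ↥SS := hSS
  apply Set.Finite.subset ((List.finite_length_le ↥SS t.1.toNat).image (List.map Subtype.val))
  rintro w ⟨hw, hsum⟩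
  refine ⟨w.attach.map (fun x => ⟨x.1, hw x.1 x.2⟩), ?_, ?_⟩
  · simp only [Set.mem_setOf_eq, List.length_map, List.length_attach]
    have := (sum_bounds w hw).1
    rw [hsum] at this
    omega
  · rw [List.map_map]; exact (List.attach_map_val).trans (List.map_id w)

lemma words_empty {t : ℤ × ℤ} (h : t.1 < t.2 ∨ t.1 < -t.2) : Words t = ∅ := by
  ext w
  simp only [Set.mem_empty_iff_false, iff_false]
  rintro ⟨hw, hsum⟩
  have := sum_bounds w hw
  rw [hsum] at this
  omega

lemma words_zero : Words (0 : ℤ × ℤ) = {[]} := by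
  ext w
  constructor
  · rintro ⟨hw, hsum⟩
    cases w with
    | nil => rfl
    | cons s w =>
      have := sum_bounds (s :: w) hw
      rw [hsum] at this
      have h1 := this.1
      rw [List.length_cons, Prod.fst_zero] at h1
      push_cast at h1
      omega
  · rintro rfl; exact ⟨by simp, rfl⟩

lemma C_zero : C (0 : ℤ × ℤ) = 1 := by
  rw [C, words_zero, Set.ncard_singleton]

lemma C_empty {t : ℤ × ℤ} (h : t.1 < t.2 ∨ t.1 < -t.2) : C t = 0 := by
  rw [C, words_empty h, Set.ncard_empty]

lemma words_decomp {t : ℤ × ℤ} (ht : t ≠ 0) :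
    Words t = (List.cons (1,1) '' Words (t - (1,1))) ∪
      (List.cons (1,-1) '' Words (t - (1,-1))) ∪ (List.cons (2,0) '' Words (t - (2,0))) := by
  ext w
  constructor
  · rintro ⟨hw, hsum⟩
    cases w with
    | nil => exact absurd hsum.symm (by simpa using ht)
    | cons s w =>
      have hs := mem_SS.1 (hw s (by simp))
      have hw' : ∀ x ∈ w, x ∈ SS := fun x hx => hw x (by simp [hx])
      have hsum' : w.sum = t - s := by
        rw [List.sum_cons] at hsum; exact eq_sub_of_add_eq' hsum
      rcases hs with rfl | rfl | rfl
      · exact Or.inl (Or.inl ⟨w, ⟨hw', hsum'⟩, rfl⟩)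
      · exact Or.inl (Or.inr ⟨w, ⟨hw', hsum'⟩, rfl⟩)
      · exact Or.inr ⟨w, ⟨hw', hsum'⟩, rfl⟩
  · rintro ((⟨w, ⟨hw, hsum⟩, rfl⟩ | ⟨w, ⟨hw, hsum⟩, rfl⟩) | ⟨w, ⟨hw, hsum⟩, rfl⟩) <;>
    refine ⟨?_, by simp [hsum]⟩ <;>
    · intro x hx
      rcases List.mem_cons.1 hx with rfl | hx
      · simp [mem_SS]
      · exact hw x hx

lemma C_rec {t : ℤ × ℤ} (ht : t ≠ 0) :
    C t = C (t - (1,1)) + C (t - (1,-1)) + C (t - (2,0)) := by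
  have hinj : ∀ s : ℤ × ℤ, Function.Injective (List.cons s) := by
    intro s x y h; simpa using h
  have fin : ∀ u : ℤ × ℤ, ((List.cons u) '' Words (t - u)).Finite :=
    fun u => (words_finite _).image _
  have d1 : Disjoint ((List.cons ((1:ℤ),(1:ℤ))) '' Words (t - (1,1)))
      ((List.cons ((1:ℤ),(-1:ℤ))) '' Words (t - (1,-1))) := by
    rw [Set.disjoint_left]; rintro w ⟨x, _, rfl⟩ ⟨y, _, h⟩; simp at h
  have d2 : Disjoint (((List.cons ((1:ℤ),(1:ℤ))) '' Words (t - (1,1))) ∪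
      ((List.cons ((1:ℤ),(-1:ℤ))) '' Words (t - (1,-1))))
      ((List.cons ((2:ℤ),(0:ℤ))) '' Words (t - (2,0))) := by
    rw [Set.disjoint_left]
    rintro w (⟨x, _, rfl⟩ | ⟨x, _, rfl⟩) ⟨y, _, h⟩ <;> simp at h
  rw [C, words_decomp ht, Set.ncard_union_eq d2 ((fin _).union (fin _)) (fin _),
    Set.ncard_union_eq d1 (fin _) (fin _),
    Set.ncard_image_of_injective _ (hinj _), Set.ncard_image_of_injective _ (hinj _),
    Set.ncard_image_of_injective _ (hinj _)]
  rfl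

lemma pair_sub (a b c d : ℤ) : ((a,b) - (c,d) : ℤ × ℤ) = (a-c, b-d) := rfl

lemma pair_ne_zero {a b : ℤ} (h : a ≠ 0) : ((a, b) : ℤ × ℤ) ≠ 0 := by
  simp [Prod.ext_iff, h]

lemma C_eq_N : ∀ m i : ℕ, C ((m : ℤ), (m : ℤ) - 2*(i:ℤ)) = N i m := by
  intro m
  induction m using Nat.strong_induction_on with
  | _ m ih =>
  intro i
  match m, i with
  | 0, 0 =>
    have h : (((0:ℕ):ℤ), ((0:ℕ):ℤ) - 2*((0:ℕ):ℤ)) = (0 : ℤ × ℤ) := by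
      norm_num
    rw [h, C_zero]; rfl
  | 0, i+1 =>
    rw [C_empty (by right; push_cast; omega)]
    simp [N]
  | m+1, 0 =>
    have ht : (((m+1:ℕ):ℤ), ((m+1:ℕ):ℤ) - 2*((0:ℕ):ℤ)) ≠ 0 := by
      apply pair_ne_zero; push_cast; omega
    rw [C_rec ht]
    have e1 : ((((m+1:ℕ):ℤ), ((m+1:ℕ):ℤ) - 2*((0:ℕ):ℤ)) : ℤ×ℤ) - (1,1)
        = (((m:ℕ):ℤ), ((m:ℕ):ℤ) - 2*((0:ℕ):ℤ)) := by
      rw [pair_sub]; congr 1 <;> push_cast <;> ring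
    rw [e1, ih m (by omega) 0]
    rw [C_empty (by rw [pair_sub]; left; push_cast; omega),
      C_empty (by rw [pair_sub]; left; push_cast; omega)]
    simp [N]
  | m+1, i+1 =>
    have ht : (((m+1:ℕ):ℤ), ((m+1:ℕ):ℤ) - 2*((i+1:ℕ):ℤ)) ≠ 0 := by
      apply pair_ne_zero; push_cast; omega
    rw [C_rec ht]
    have e1 : ((((m+1:ℕ):ℤ), ((m+1:ℕ):ℤ) - 2*((i+1:ℕ):ℤ)) : ℤ×ℤ) - (1,1)
        = (((m:ℕ):ℤ), ((m:ℕ):ℤ) - 2*((i+1:ℕ):ℤ)) := by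
      rw [pair_sub]; congr 1 <;> push_cast <;> ring
    have e2 : ((((m+1:ℕ):ℤ), ((m+1:ℕ):ℤ) - 2*((i+1:ℕ):ℤ)) : ℤ×ℤ) - (1,-1)
        = (((m:ℕ):ℤ), ((m:ℕ):ℤ) - 2*((i:ℕ):ℤ)) := by
      rw [pair_sub]; congr 1 <;> push_cast <;> ring
    rw [e1, e2, ih m (by omega) (i+1), ih m (by omega) i]
    match m with
    | 0 =>
      rw [C_empty (by rw [pair_sub]; push_cast; omega)]
      simp [N]
    | m+1 =>
      have e3 : ((((m+2:ℕ):ℤ), ((m+2:ℕ):ℤ) - 2*((i+1:ℕ):ℤ)) : ℤ×ℤ) - (2,0)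
          = (((m:ℕ):ℤ), ((m:ℕ):ℤ) - 2*((i:ℕ):ℤ)) := by
        rw [pair_sub]; congr 1 <;> push_cast <;> ring
      rw [e3, ih m (by omega) i]
      simp [N]

def diffs : List (ℤ × ℤ) → List (ℤ × ℤ)
  | [] => []
  | [_] => []
  | a :: b :: t => (b - a) :: diffs (b :: t)

lemma scanl_head (w : List (ℤ × ℤ)) (a : ℤ × ℤ) :
    (List.scanl (· + ·) a w).head? = some a := by
  exact List.head?_scanl

lemma scanl_diffs : ∀ (t : List (ℤ × ℤ)) (a : ℤ × ℤ),
    List.scanl (· + ·) a (diffs (a :: t)) = a :: t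
  | [], _ => rfl
  | b :: t, a => by
    show List.scanl (· + ·) a ((b - a) :: diffs (b :: t)) = a :: b :: t
    rw [List.scanl_cons, show a + (b - a) = b by ring, scanl_diffs t b]

lemma diffs_scanl : ∀ (w : List (ℤ × ℤ)) (a : ℤ × ℤ),
    diffs (List.scanl (· + ·) a w) = w
  | [], _ => rfl
  | s :: w, a => by
    rw [List.scanl_cons]
    show diffs (a :: List.scanl (· + ·) (a + s) w) = s :: w
    cases h : List.scanl (· + ·) (a + s) w with
    | nil => exact absurd h (by simp [← List.length_eq_zero_iff, List.length_scanl])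
    | cons b t =>
      have hb : b = a + s := by
        have := (scanl_head w (a + s)).symm.trans (congrArg List.head? h)
        simpa using this.symm
      show (b - a) :: diffs (b :: t) = s :: w
      rw [← h, diffs_scanl w (a + s), hb]
      congr 1
      ring

lemma diffs_sum : ∀ (t : List (ℤ × ℤ)) (a : ℤ × ℤ),
    (diffs (a :: t)).sum = (a :: t).getLast (by simp) - a
  | [], a => by simp [diffs]
  | b :: t, a => by
    show ((b - a) :: diffs (b :: t)).sum = _
    rw [List.sum_cons, diffs_sum t b]
    have h2 : (a :: b :: t).getLast (by simp) = (b :: t).getLast (by simp) :=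
      List.getLast_cons (by simp)
    rw [h2]
    ring

lemma diffs_mem : ∀ (p : List (ℤ × ℤ)), p.Chain' SchroderStep → ∀ s ∈ diffs p, s ∈ SS
  | [], _ => by simp [diffs]
  | [_], _ => by simp [diffs]
  | a :: b :: t, h => by
    change List.IsChain SchroderStep (a :: b :: t) at h
    rw [List.isChain_cons_cons] at h
    intro s hs
    rcases List.mem_cons.1 hs with rfl | hs
    · rcases h.1 with h' | h' | h' <;> rw [h'] <;> simp [mem_SS]
    · exact diffs_mem (b :: t) h.2 s hs

lemma chain_scanl : ∀ (w : List (ℤ × ℤ)) (a : ℤ × ℤ), (∀ s ∈ w, s ∈ SS) →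
    (List.scanl (· + ·) a w).Chain' SchroderStep
  | [], a, _ => List.isChain_singleton a
  | s :: w, a, h => by
    rw [List.scanl_cons]
    show ((a :: List.scanl (· + ·) (a + s) w)).Chain' SchroderStep
    cases hE : List.scanl (· + ·) (a + s) w with
    | nil => exact absurd hE (by simp [← List.length_eq_zero_iff, List.length_scanl])
    | cons b t =>
      have hb : b = a + s := by
        have := (scanl_head w (a + s)).symm.trans (congrArg List.head? hE)
        simpa using this.symm
      change List.IsChain SchroderStep (a :: b :: t)
      rw [List.isChain_cons_cons]
      constructor
      · have : b - a = s := by rw [hb]; ring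
        have hsS := mem_SS.1 (h s (by simp))
        unfold SchroderStep
        rw [this]
        tauto
      · rw [← hE]; exact chain_scanl w (a + s) (fun x hx => h x (by simp [hx]))

lemma scanl_getLast : ∀ (w : List (ℤ × ℤ)) (a : ℤ × ℤ),
    (List.scanl (· + ·) a w).getLast? = some (a + w.sum)
  | [], a => by simp
  | s :: w, a => by
    rw [List.scanl_cons]
    show (a :: List.scanl (· + ·) (a + s) w).getLast? = _
    cases hE : List.scanl (· + ·) (a + s) w with
    | nil => exact absurd hE (by simp [← List.length_eq_zero_iff, List.length_scanl])
    | cons b t =>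
      rw [List.getLast?_cons_cons, ← hE, scanl_getLast w (a + s), List.sum_cons]
      congr 1
      ring

lemma mem_words_of_path {a b : ℤ × ℤ} {p : List (ℤ × ℤ)} (hp : p ∈ SchroderPaths a b) :
    diffs p ∈ Words (b - a) := by
  obtain ⟨hc, hh, hl⟩ := hp
  cases p with
  | nil => simp at hh
  | cons x t =>
    have hx : x = a := by simpa using hh
    subst hx
    refine ⟨diffs_mem _ hc, ?_⟩
    rw [diffs_sum t x]
    have : (x :: t).getLast? = some ((x :: t).getLast (by simp)) :=
      List.getLast?_eq_getLast _
    rw [this] at hl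
    rw [Option.some_inj.1 hl]

lemma mem_paths_of_word {a b : ℤ × ℤ} {w : List (ℤ × ℤ)} (hw : w ∈ Words (b - a)) :
    List.scanl (· + ·) a w ∈ SchroderPaths a b := by
  obtain ⟨hmem, hsum⟩ := hw
  refine ⟨chain_scanl w a hmem, scanl_head w a, ?_⟩
  rw [scanl_getLast w a, hsum]
  congr 1
  ring

lemma scanl_diffs_of_path {a b : ℤ × ℤ} {p : List (ℤ × ℤ)} (hp : p ∈ SchroderPaths a b) :
    List.scanl (· + ·) a (diffs p) = p := by
  obtain ⟨hc, hh, hl⟩ := hp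
  cases p with
  | nil => simp at hh
  | cons x t =>
    have hx : x = a := by simpa using hh
    subst hx
    exact scanl_diffs t x

noncomputable def pathsEquiv (a b : ℤ × ℤ) : ↥(SchroderPaths a b) ≃ ↥(Words (b - a)) where
  toFun p := ⟨diffs p.1, mem_words_of_path p.2⟩
  invFun w := ⟨List.scanl (· + ·) a w.1, mem_paths_of_word w.2⟩
  left_inv p := Subtype.ext (scanl_diffs_of_path p.2)
  right_inv w := Subtype.ext (diffs_scanl w.1 a)

lemma M_eq_N (i j : ℕ) : M i j = N i (2 * j + 1) := by
  rw [M, Nat.card_congr (pathsEquiv _ _), Nat.card_coe_set_eq]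
  have h : ((2 * (j : ℤ) + 1, 2 * (j : ℤ) + 1) : ℤ × ℤ) - (0, 2 * (i : ℤ))
      = (((2 * j + 1 : ℕ) : ℤ), ((2 * j + 1 : ℕ) : ℤ) - 2 * (i : ℤ)) := by
    rw [pair_sub]; congr 1 <;> push_cast <;> ring
  rw [h]
  exact C_eq_N (2 * j + 1) i

def F : PS := fun d => (N (d 0) (d 1) : ℚ)

lemma coeff_F (d : Fin 2 →₀ ℕ) : MvPowerSeries.coeff d F = N (d 0) (d 1) := rfl

lemma N_rec (a b : ℕ) : (N a b : ℚ) = (if a = 0 ∧ b = 0 then 1 else 0)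
    + (if 1 ≤ b then (N a (b-1) : ℚ) else 0)
    + (if 1 ≤ a ∧ 1 ≤ b then (N (a-1) (b-1) : ℚ) else 0)
    + (if 1 ≤ a ∧ 2 ≤ b then (N (a-1) (b-2) : ℚ) else 0) := by
  match a, b with
  | 0, 0 => simp [N]
  | a+1, 0 => simp [N]
  | 0, b+1 => simp [N]
  | a+1, 1 => simp [N]
  | a+1, b+2 => simp [N]

lemma single_le_d (x y : ℕ) (d : Fin 2 →₀ ℕ) :
    Finsupp.single 0 x + Finsupp.single 1 y ≤ d ↔ x ≤ d 0 ∧ y ≤ d 1 := by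
  rw [Finsupp.le_def]
  constructor
  · intro h
    refine ⟨?_, ?_⟩
    · have := h 0; simpa using this
    · have := h 1; simpa using this
  · intro h i
    fin_cases i
    · simpa using h.1
    · simpa using h.2

lemma d_sub_apply (x y : ℕ) (d : Fin 2 →₀ ℕ) :
    ((d - (Finsupp.single 0 x + Finsupp.single 1 y) : Fin 2 →₀ ℕ)) 0 = d 0 - x ∧
    ((d - (Finsupp.single 0 x + Finsupp.single 1 y) : Fin 2 →₀ ℕ)) 1 = d 1 - y := by
  constructor <;> rw [Finsupp.tsub_apply] <;> simp

lemma d_eq_zero (d : Fin 2 →₀ ℕ) : d = 0 ↔ d 0 = 0 ∧ d 1 = 0 := by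
  constructor
  · rintro rfl; simp
  · intro h
    ext i
    fin_cases i
    · simpa using h.1
    · simpa using h.2

lemma vv_eq : vv = MvPowerSeries.monomial (Finsupp.single 0 0 + Finsupp.single 1 1) 1 := by
  rw [vv, MvPowerSeries.X, Finsupp.single_zero, zero_add]

lemma uv_eq : uu * vv = MvPowerSeries.monomial (Finsupp.single 0 1 + Finsupp.single 1 1) 1 := by
  rw [uu, vv, MvPowerSeries.X, MvPowerSeries.X, MvPowerSeries.monomial_mul_monomial, one_mul]

lemma uv2_eq : uu * vv ^ 2
    = MvPowerSeries.monomial (Finsupp.single 0 1 + Finsupp.single 1 2) 1 := by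
  rw [uu, vv, MvPowerSeries.X_pow_eq, MvPowerSeries.X, MvPowerSeries.monomial_mul_monomial,
    one_mul]

lemma key : F * (1 - vv - uu * vv - uu * vv ^ 2) = 1 := by
  classical
  apply MvPowerSeries.ext
  intro d
  rw [mul_sub, mul_sub, mul_sub, mul_one, map_sub, map_sub, map_sub]
  rw [uv2_eq, uv_eq, vv_eq,
    MvPowerSeries.coeff_mul_monomial, MvPowerSeries.coeff_mul_monomial,
    MvPowerSeries.coeff_mul_monomial, MvPowerSeries.coeff_one]
  rw [coeff_F]
  simp only [single_le_d, d_eq_zero, mul_one]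
  simp only [coeff_F, (d_sub_apply 0 1 d).1, (d_sub_apply 0 1 d).2,
    (d_sub_apply 1 1 d).1, (d_sub_apply 1 1 d).2, (d_sub_apply 1 2 d).1, (d_sub_apply 1 2 d).2,
    Nat.zero_le, true_and, Nat.sub_zero]
  rw [N_rec (d 0) (d 1)]
  ring


/-- The number of Schröder paths from `(0,2i)` to `(2j+1,2j+1)` is the coefficient of
`u^i v^(2j+1)` in `1/(1 - v - uv - uv²)`. -/
theorem schroder_count_eq_sigma_coeff (i j : ℕ) :
    (M i j : ℚ) = cf i (2 * j + 1) (1 - vv - uu * vv - uu * vv ^ 2)⁻¹ := by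
  have hc : MvPowerSeries.constantCoeff (1 - vv - uu * vv - uu * vv ^ 2) ≠ 0 := by
    simp [uu, vv]
  rw [show (1 - vv - uu * vv - uu * vv ^ 2)⁻¹ = F from
    (MvPowerSeries.inv_eq_iff_mul_eq_one hc).2 key]
  rw [cf, coeff_F]
  have h0 : (Finsupp.single 0 i + Finsupp.single 1 (2*j+1) : Fin 2 →₀ ℕ) 0 = i := by simp
  have h1 : (Finsupp.single 0 i + Finsupp.single 1 (2*j+1) : Fin 2 →₀ ℕ) 1 = 2*j+1 := by simp
  rw [h0, h1, M_eq_N]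
end
end

section
/- Let L_{i,j} := ((1+2u−u²)/(1−u(1+v+uv)))|_{u^i v^j}, M_{i,j} := f_DT(u,v)|_{u^i v^j}, and P_{i,j} := g_20V(u,v)|_{u^i v^j} for i, j ≥ 0. Then: (1) L_{i,j} = 0 whenever j > i and L_{i,i} = 1 for all i (L is lower triangular with unit diagonal); and (2) for all i, j ≥ 0, Σ_{ℓ=0}^{i} L_{i,ℓ}·M_{ℓ,j} = P_{i,j}. -/
noncomputable section

/-- `f_DT(u,v) = (1+u)/(1 - v - 4uv - u²v + u²v²)` as a power series. -/
def fDT : PS := (1 + uu) * (1 - vv - 4 * uu * vv - uu ^ 2 * vv + uu ^ 2 * vv ^ 2)⁻¹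

/-- `g_20V(u,v) = (1+u²)(1+2u-u²)/((1-u²v)((1-u)² - v(1+u)²))` as a power series. -/
def g20V : PS :=
  (1 + uu ^ 2) * (1 + 2 * uu - uu ^ 2) *
    ((1 - uu ^ 2 * vv) * ((1 - uu) ^ 2 - vv * (1 + uu) ^ 2))⁻¹

/-- The generating series of the lower-triangular matrix `L`. -/
def fL : PS := (1 + 2 * uu - uu ^ 2) * (1 - uu * (1 + vv + uu * vv))⁻¹

open MvPowerSeries Finsupp in
lemma cf_shift (a b i j : ℕ) (f : PS) :
    cf i j (uu ^ a * vv ^ b * f) = if a ≤ i ∧ b ≤ j then cf (i - a) (j - b) f else 0 := by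
  have h1 : (uu : PS) ^ a * vv ^ b = monomial (single 0 a + single 1 b) 1 := by
    rw [uu, vv, X_pow_eq, X_pow_eq, monomial_mul_monomial, one_mul]
  have hle : (single (0:Fin 2) a + single 1 b ≤ single (0:Fin 2) i + single 1 j) ↔ (a ≤ i ∧ b ≤ j) := by
    rw [Finsupp.le_def]
    constructor
    · intro h
      refine ⟨?_, ?_⟩
      · have := h 0; simpa [Finsupp.single_apply] using this
      · have := h 1; simpa [Finsupp.single_apply] using this
    · intro ⟨h0, h1⟩ s
      fin_cases s <;> simp [Finsupp.single_apply, h0, h1]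
  have hsub : (single (0:Fin 2) i + single 1 j) - (single 0 a + single 1 b)
      = single (0:Fin 2) (i-a) + single 1 (j-b) := by
    ext s
    fin_cases s <;> simp [Finsupp.single_apply]
  rw [cf, cf, h1, MvPowerSeries.coeff_monomial_mul, hsub]
  simp [hle]

/-- Integer-indexed coefficient (zero outside the first quadrant). -/
def cfz (i j : ℤ) (f : PS) : ℚ :=
  if 0 ≤ i ∧ 0 ≤ j then cf i.toNat j.toNat f else 0

lemma cfz_neg {i j : ℤ} (h : i < 0 ∨ j < 0) (f : PS) : cfz i j f = 0 := by
  rw [cfz, if_neg]; omega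

lemma cfz_add (i j : ℤ) (f g : PS) : cfz i j (f + g) = cfz i j f + cfz i j g := by
  unfold cfz cf; split_ifs <;> simp

lemma cfz_sub (i j : ℤ) (f g : PS) : cfz i j (f - g) = cfz i j f - cfz i j g := by
  unfold cfz cf; split_ifs <;> simp

lemma cfz_smul (i j : ℤ) (c : ℚ) (f : PS) : cfz i j (c • f) = c * cfz i j f := by
  unfold cfz cf; split_ifs <;> simp

lemma cfz_shift (a b : ℕ) (i j : ℤ) (f : PS) :
    cfz i j (uu ^ a * vv ^ b * f) = cfz (i - a) (j - b) f := by
  unfold cfz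
  split_ifs with h1 h2 h2
  · rw [cf_shift, if_pos (by omega)]
    congr 1 <;> omega
  · rw [cf_shift, if_neg (by omega)]
  · omega
  · rfl

lemma cfz_one (i j : ℤ) : cfz i j 1 = if i = 0 ∧ j = 0 then 1 else 0 := by
  unfold cfz cf
  split_ifs with h1 h2 h2
  · rw [MvPowerSeries.coeff_one, if_pos]
    ext s
    fin_cases s <;> simp [Finsupp.single_apply] <;> omega
  · rw [MvPowerSeries.coeff_one, if_neg]
    intro hc
    have h0 := DFunLike.congr_fun hc 0
    have h1' := DFunLike.congr_fun hc 1
    simp [Finsupp.single_apply] at h0 h1'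
    omega
  · omega
  · rfl

/-- Kronecker delta. -/
def dl (i j a b : ℤ) : ℚ := if i = a ∧ j = b then 1 else 0

lemma cfz_monomial (a b : ℕ) (i j : ℤ) :
    cfz i j (uu ^ a * vv ^ b * (1:PS)) = dl i j a b := by
  rw [cfz_shift, cfz_one, dl]
  congr 1
  simp [sub_eq_zero]

/-! ### The basic power series identities -/

def G1 : PS := uu * (1 + uu) * g20V * (1 - uu)⁻¹
def G2 : PS := uu * (1 + uu) * G1 * (1 - uu)⁻¹

open MvPowerSeries in
lemma keyL : fL * (1 - uu * (1 + vv + uu * vv)) = 1 + 2 * uu - uu ^ 2 := by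
  rw [fL, mul_assoc, MvPowerSeries.inv_mul_cancel _ (by simp [uu, vv]), mul_one]

open MvPowerSeries in
lemma keyM : fDT * (1 - vv - 4 * uu * vv - uu ^ 2 * vv + uu ^ 2 * vv ^ 2) = 1 + uu := by
  rw [fDT, mul_assoc, MvPowerSeries.inv_mul_cancel _ (by simp [uu, vv]), mul_one]

open MvPowerSeries in
lemma keyP : g20V * ((1 - uu ^ 2 * vv) * ((1 - uu) ^ 2 - vv * (1 + uu) ^ 2))
    = (1 + uu ^ 2) * (1 + 2 * uu - uu ^ 2) := by
  rw [g20V, mul_assoc, MvPowerSeries.inv_mul_cancel _ (by simp [uu, vv]), mul_one]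

open MvPowerSeries in
lemma keyG1 : G1 * (1 - uu) = uu * (1 + uu) * g20V := by
  rw [G1, mul_assoc, MvPowerSeries.inv_mul_cancel _ (by simp [uu, vv]), mul_one]

open MvPowerSeries in
lemma keyG2 : G2 * (1 - uu) = uu * (1 + uu) * G1 := by
  rw [G2, mul_assoc, MvPowerSeries.inv_mul_cancel _ (by simp [uu, vv]), mul_one]

/-! ### Coefficient-level recurrences -/

def Lz (i j : ℤ) : ℚ := cfz i j fL
def Mz (i j : ℤ) : ℚ := cfz i j fDT
def Pz (i j : ℤ) : ℚ := cfz i j g20V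
def Qz (i j : ℤ) : ℚ := cfz i j G1
def Rz (i j : ℤ) : ℚ := cfz i j G2

lemma recL (i j : ℤ) :
    Lz i j = Lz (i-1) j + Lz (i-1) (j-1) + Lz (i-2) (j-1)
      + (dl i j 0 0 + 2 * dl i j 1 0 - dl i j 2 0) := by
  have hI : fL = uu^1*vv^0*fL + uu^1*vv^1*fL + uu^2*vv^1*fL
      + (uu^0*vv^0*(1:PS) + (uu^1*vv^0*(1:PS) + uu^1*vv^0*(1:PS)) - uu^2*vv^0*(1:PS)) := by
    linear_combination keyL
  have h := congrArg (cfz i j) hI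
  simp only [cfz_add, cfz_sub, cfz_shift, cfz_monomial, Nat.cast_one, Nat.cast_ofNat,
    Nat.cast_zero, sub_zero] at h
  unfold Lz dl
  rw [h]
  simp only [cfz_one]
  split_ifs <;> first | ring1 | (exfalso; omega)

lemma recM (i j : ℤ) :
    Mz i j = Mz i (j-1) + 4 * Mz (i-1) (j-1) + Mz (i-2) (j-1) - Mz (i-2) (j-2)
      + (dl i j 0 0 + dl i j 1 0) := by
  have hI : fDT = uu^0*vv^1*fDT
      + (uu^1*vv^1*fDT + uu^1*vv^1*fDT + uu^1*vv^1*fDT + uu^1*vv^1*fDT)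
      + uu^2*vv^1*fDT - uu^2*vv^2*fDT
      + (uu^0*vv^0*(1:PS) + uu^1*vv^0*(1:PS)) := by
    linear_combination keyM
  have h := congrArg (cfz i j) hI
  simp only [cfz_add, cfz_sub, cfz_shift, cfz_monomial, Nat.cast_one, Nat.cast_ofNat,
    Nat.cast_zero, sub_zero] at h
  unfold Mz dl
  rw [h]
  simp only [cfz_one]
  split_ifs <;> first | ring1 | (exfalso; omega)

lemma recQ (i j : ℤ) : Qz i j = Qz (i-1) j + Pz (i-1) j + Pz (i-2) j := by
  have hI : G1 = uu^1*vv^0*G1 + uu^1*vv^0*g20V + uu^2*vv^0*g20V := by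
    linear_combination keyG1
  have h := congrArg (cfz i j) hI
  simp only [cfz_add, cfz_shift, Nat.cast_one, Nat.cast_ofNat, Nat.cast_zero, sub_zero] at h
  unfold Qz Pz
  rw [h]

lemma recR (i j : ℤ) : Rz i j = Rz (i-1) j + Qz (i-1) j + Qz (i-2) j := by
  have hI : G2 = uu^1*vv^0*G2 + uu^1*vv^0*G1 + uu^2*vv^0*G1 := by
    linear_combination keyG2
  have h := congrArg (cfz i j) hI
  simp only [cfz_add, cfz_shift, Nat.cast_one, Nat.cast_ofNat, Nat.cast_zero, sub_zero] at h
  unfold Rz Qz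
  rw [h]

/-- The v-recurrence combination for `P, Q, R`. -/
def Yps : PS := g20V - uu^0*vv^1*g20V
    - (uu^0*vv^1*G1 + uu^0*vv^1*G1 + uu^0*vv^1*G1 + uu^0*vv^1*G1)
    - uu^0*vv^1*G2 + uu^0*vv^2*G2

def Zz (i j : ℤ) : ℚ := cfz i j Yps

lemma Zz_eq (i j : ℤ) :
    Zz i j = Pz i j - Pz i (j-1) - 4 * Qz i (j-1) - Rz i (j-1) + Rz i (j-2) := by
  unfold Zz Yps
  simp only [cfz_add, cfz_sub, cfz_shift, Nat.cast_one, Nat.cast_ofNat, Nat.cast_zero, sub_zero]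
  unfold Pz Qz Rz; ring

set_option maxHeartbeats 1000000 in
lemma recZ (i j : ℤ) :
    Zz i j = 2 * Zz (i-1) j - Zz (i-2) j
      + (dl i j 0 0 + 2 * dl i j 1 0 + 2 * dl i j 3 0 - dl i j 4 0) := by
  have hI : Yps = (uu^1*vv^0*Yps + uu^1*vv^0*Yps) - uu^2*vv^0*Yps
      + (uu^0*vv^0*(1:PS) + (uu^1*vv^0*(1:PS) + uu^1*vv^0*(1:PS))
        + (uu^3*vv^0*(1:PS) + uu^3*vv^0*(1:PS)) - uu^4*vv^0*(1:PS)) := by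
    unfold Yps
    linear_combination keyP + ((-4)*vv*(1-uu) + (vv^2-vv)*uu*(1+uu)) * keyG1
      + ((1-uu)*(vv^2-vv)) * keyG2
  have h := congrArg (cfz i j) hI
  simp only [cfz_add, cfz_sub, cfz_shift, cfz_monomial, Nat.cast_one, Nat.cast_ofNat,
    Nat.cast_zero, sub_zero] at h
  unfold Zz dl
  rw [h]
  simp only [cfz_one]
  split_ifs <;> first | ring1 | (exfalso; omega)

/-! ### Scalar layer -/

lemma int_ind (Φ : ℤ → Prop) (h0 : ∀ i : ℤ, i < 0 → Φ i)
    (h : ∀ i : ℤ, 0 ≤ i → (∀ k : ℤ, k < i → Φ k) → Φ i) : ∀ i, Φ i := by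
  have H : ∀ n : ℕ, ∀ k : ℤ, k < (n:ℤ) → Φ k := by
    intro n
    induction n with
    | zero => exact fun k hk => h0 k (by exact_mod_cast hk)
    | succ m ih =>
      intro k hk
      rcases lt_or_ge k (m:ℤ) with h' | h'
      · exact ih k h'
      · have hkm : k = (m:ℤ) := by omega
        subst hkm
        rcases lt_or_ge (m:ℤ) 0 with hm | hm
        · exact h0 _ hm
        · exact h _ hm ih
  intro i
  exact H (i+1).toNat i (by omega)

lemma lemA : ∀ i : ℤ, ∀ j, i < j → Lz i j = 0 := by
  refine int_ind _ (fun i hi j hj => cfz_neg (Or.inl hi) fL) ?_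
  intro i hi ih j hj
  rw [recL, ih (i-1) (by omega) j (by omega), ih (i-1) (by omega) (j-1) (by omega),
      ih (i-2) (by omega) (j-1) (by omega)]
  have hj0 : ¬ (j = 0) := by omega
  simp [dl, hj0]

lemma lemB : ∀ i : ℤ, 0 ≤ i → Lz i i = 1 := by
  refine int_ind _ (fun i hi h => absurd h (by omega)) ?_
  intro i hi ih _
  rw [recL]
  rcases eq_or_lt_of_le hi with h0 | h0
  · have h0' : i = 0 := h0.symm
    subst h0'
    rw [show Lz (0-1) 0 = 0 from cfz_neg (by norm_num) fL,
        show Lz (0-1) (0-1) = 0 from cfz_neg (by norm_num) fL,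
        show Lz (0-2) (0-1) = 0 from cfz_neg (by norm_num) fL]
    unfold dl
    norm_num
  · rw [lemA (i-1) i (by omega), ih (i-1) (by omega) (by omega), lemA (i-2) (i-1) (by omega)]
    unfold dl
    split_ifs <;> first | ring1 | (exfalso; omega)

/-! ### The matrix products -/

def Sz (i j : ℤ) : ℚ := ∑ l ∈ Finset.range (i+1).toNat, Lz i l * Mz l j
def Tz (i j : ℤ) : ℚ := ∑ l ∈ Finset.range (i+1).toNat, Lz i (l+1) * Mz l j
def Uz (i j : ℤ) : ℚ := ∑ l ∈ Finset.range (i+1).toNat, Lz i (l+2) * Mz l j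

lemma sum_stable {c : ℤ} {F : ℕ → ℚ} (hF : ∀ l : ℕ, c ≤ (l:ℤ) → F l = 0) :
    ∀ {n m : ℕ}, c ≤ (n:ℤ) → c ≤ (m:ℤ) →
      ∑ l ∈ Finset.range n, F l = ∑ l ∈ Finset.range m, F l := by
  have key : ∀ {n m : ℕ}, n ≤ m → c ≤ (n:ℤ) →
      ∑ l ∈ Finset.range n, F l = ∑ l ∈ Finset.range m, F l := by
    intro n m hnm hc
    apply Finset.sum_subset (Finset.range_subset_range.mpr hnm)
    intro x hx hnx
    simp only [Finset.mem_range] at hx hnx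
    exact hF x (by omega)
  intro n m hn hm
  rcases le_total n m with h | h
  · exact key h hn
  · exact (key h hm).symm

lemma Sz_eq (i j : ℤ) {n : ℕ} (hn : i + 1 ≤ (n:ℤ)) :
    Sz i j = ∑ l ∈ Finset.range n, Lz i l * Mz l j := by
  unfold Sz
  exact sum_stable (fun l hl => by rw [lemA i l (by omega), zero_mul]) (by omega) hn

lemma Tz_eq (i j : ℤ) {n : ℕ} (hn : i ≤ (n:ℤ)) :
    Tz i j = ∑ l ∈ Finset.range n, Lz i ((l:ℤ)+1) * Mz l j := by
  unfold Tz
  exact sum_stable (fun l hl => by rw [lemA i ((l:ℤ)+1) (by omega), zero_mul]) (by omega) hn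

lemma Uz_eq (i j : ℤ) {n : ℕ} (hn : i - 1 ≤ (n:ℤ)) :
    Uz i j = ∑ l ∈ Finset.range n, Lz i ((l:ℤ)+2) * Mz l j := by
  unfold Uz
  exact sum_stable (fun l hl => by rw [lemA i ((l:ℤ)+2) (by omega), zero_mul]) (by omega) hn

lemma Mz_neg {k : ℤ} (j : ℤ) (hk : k < 0) : Mz k j = 0 := cfz_neg (Or.inl hk) fDT

lemma shift1 (i j : ℤ) (n : ℕ) :
    ∑ l ∈ Finset.range (n+1), Lz i l * Mz ((l:ℤ)-1) j
      = ∑ l ∈ Finset.range n, Lz i ((l:ℤ)+1) * Mz l j := by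
  rw [Finset.sum_range_succ']
  rw [show (((0:ℕ):ℤ)) - 1 = -1 from by norm_num]
  rw [Mz_neg j (by norm_num), mul_zero, add_zero]
  apply Finset.sum_congr rfl
  intro l _
  rw [show ((l+1:ℕ):ℤ) = (l:ℤ)+1 from by push_cast; ring]
  rw [show (l:ℤ)+1-1 = (l:ℤ) from by ring]

lemma shift2 (i j : ℤ) (n : ℕ) :
    ∑ l ∈ Finset.range (n+2), Lz i l * Mz ((l:ℤ)-2) j
      = ∑ l ∈ Finset.range n, Lz i ((l:ℤ)+2) * Mz l j := by
  rw [show n + 2 = (n+1)+1 from rfl, Finset.sum_range_succ']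
  rw [show (((0:ℕ):ℤ)) - 2 = -2 from by norm_num]
  rw [Mz_neg j (by norm_num), mul_zero, add_zero]
  rw [Finset.sum_range_succ']
  rw [show ((0+1:ℕ):ℤ) - 2 = -1 from by norm_num]
  rw [Mz_neg j (by norm_num), mul_zero, add_zero]
  apply Finset.sum_congr rfl
  intro l _
  rw [show ((l+1+1:ℕ):ℤ) = (l:ℤ)+2 from by push_cast; ring]
  rw [show (l:ℤ)+2-2 = (l:ℤ) from by ring]

lemma Tz_zero_of_neg {i : ℤ} (j : ℤ) (hi : i < 0) : Tz i j = 0 := by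
  unfold Tz
  rw [show (i+1).toNat = 0 from by omega]
  simp

lemma Sz_zero_of_neg {i : ℤ} (j : ℤ) (hi : i < 0) : Sz i j = 0 := by
  unfold Sz
  rw [show (i+1).toNat = 0 from by omega]
  simp

lemma Uz_zero_of_neg {i : ℤ} (j : ℤ) (hi : i < 0) : Uz i j = 0 := by
  unfold Uz
  rw [show (i+1).toNat = 0 from by omega]
  simp

lemma recT (i j : ℤ) : Tz i j = Tz (i-1) j + Sz (i-1) j + Sz (i-2) j := by
  rcases lt_or_ge i 0 with hi | hi
  · rw [Tz_zero_of_neg j hi, Tz_zero_of_neg j (by omega), Sz_zero_of_neg j (by omega),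
        Sz_zero_of_neg j (by omega)]
    ring
  · set m := i.toNat with hm
    rw [Tz_eq i j (n := m+1) (by omega), Tz_eq (i-1) j (n := m+1) (by omega),
        Sz_eq (i-1) j (n := m+1) (by omega), Sz_eq (i-2) j (n := m+1) (by omega)]
    rw [← Finset.sum_add_distrib, ← Finset.sum_add_distrib]
    apply Finset.sum_congr rfl
    intro l _
    have h := recL i ((l:ℤ)+1)
    rw [show (l:ℤ)+1-1 = (l:ℤ) from by ring] at h
    have hd : dl i ((l:ℤ)+1) 0 0 + 2 * dl i ((l:ℤ)+1) 1 0 - dl i ((l:ℤ)+1) 2 0 = 0 := by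
      unfold dl
      split_ifs <;> first | ring1 | (exfalso; omega)
    rw [h, hd]
    ring

lemma recU (i j : ℤ) : Uz i j = Uz (i-1) j + Tz (i-1) j + Tz (i-2) j := by
  rcases lt_or_ge i 0 with hi | hi
  · rw [Uz_zero_of_neg j hi, Uz_zero_of_neg j (by omega), Tz_zero_of_neg j (by omega),
        Tz_zero_of_neg j (by omega)]
    ring
  · set m := i.toNat with hm
    rw [Uz_eq i j (n := m+1) (by omega), Uz_eq (i-1) j (n := m+1) (by omega),
        Tz_eq (i-1) j (n := m+1) (by omega), Tz_eq (i-2) j (n := m+1) (by omega)]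
    rw [← Finset.sum_add_distrib, ← Finset.sum_add_distrib]
    apply Finset.sum_congr rfl
    intro l _
    have h := recL i ((l:ℤ)+2)
    rw [show (l:ℤ)+2-1 = (l:ℤ)+1 from by ring] at h
    have hd : dl i ((l:ℤ)+2) 0 0 + 2 * dl i ((l:ℤ)+2) 1 0 - dl i ((l:ℤ)+2) 2 0 = 0 := by
      unfold dl
      split_ifs <;> first | ring1 | (exfalso; omega)
    rw [h, hd]
    ring

lemma S5lemma (i : ℤ) (hi : 0 ≤ i) :
    ∑ l ∈ Finset.range (i.toNat + 1), Lz i l * (dl l 0 0 0 + dl l 0 1 0)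
      = Lz i 0 + Lz i 1 := by
  have e : ∀ l ∈ Finset.range (i.toNat + 1),
      Lz i l * (dl l 0 0 0 + dl l 0 1 0)
        = (if l = 0 then Lz i 0 else 0) + (if l = 1 then Lz i 1 else 0) := by
    intro l _
    rcases l with _ | _ | l
    · unfold dl; norm_num
    · unfold dl; norm_num
    · unfold dl
      have h2 : ((l:ℤ)+1+1) ≠ 0 := by omega
      have h3 : ((l:ℤ)+1+1) ≠ 1 := by omega
      push_cast
      simp [h2, h3]
  rw [Finset.sum_congr rfl e, Finset.sum_add_distrib]
  rw [Finset.sum_ite_eq' (Finset.range (i.toNat+1)) 0 (fun _ => Lz i 0),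
      Finset.sum_ite_eq' (Finset.range (i.toNat+1)) 1 (fun _ => Lz i 1)]
  rw [if_pos (by simp [Finset.mem_range])]
  rcases lt_or_ge i 1 with h1 | h1
  · rw [if_neg (by simp [Finset.mem_range]; omega)]
    rw [lemA i 1 (by omega)]
  · rw [if_pos (by simp [Finset.mem_range]; omega)]

lemma recS (i j : ℤ) :
    Sz i j = Sz i (j-1) + 4 * Tz i (j-1) + Uz i (j-1) - Uz i (j-2)
      + (if j = 0 then Lz i 0 + Lz i 1 else 0) := by
  rcases lt_or_ge i 0 with hi | hi
  · rw [Sz_zero_of_neg _ hi, Sz_zero_of_neg _ hi, Tz_zero_of_neg _ hi, Uz_zero_of_neg _ hi,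
        Uz_zero_of_neg _ hi,
        show Lz i 0 = 0 from cfz_neg (Or.inl hi) fL,
        show Lz i 1 = 0 from cfz_neg (Or.inl hi) fL]
    simp
  · set m := i.toNat with hm
    have e0 : Sz i j = ∑ l ∈ Finset.range (m+1), Lz i l * Mz l j := Sz_eq i j (by omega)
    rw [e0]
    have e1 : ∀ l ∈ Finset.range (m+1),
        Lz i l * Mz l j
          = Lz i l * Mz l (j-1) + 4 * (Lz i l * Mz ((l:ℤ)-1) (j-1))
            + Lz i l * Mz ((l:ℤ)-2) (j-1) - Lz i l * Mz ((l:ℤ)-2) (j-2)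
            + Lz i l * (dl l j 0 0 + dl l j 1 0) := by
      intro l _
      rw [recM (l:ℤ) j]
      ring
    rw [Finset.sum_congr rfl e1]
    rw [Finset.sum_add_distrib, Finset.sum_sub_distrib, Finset.sum_add_distrib,
        Finset.sum_add_distrib]
    have hA : ∑ l ∈ Finset.range (m+1), Lz i l * Mz l (j-1) = Sz i (j-1) :=
      (Sz_eq i (j-1) (by omega)).symm
    have hB : ∑ l ∈ Finset.range (m+1), 4 * (Lz i l * Mz ((l:ℤ)-1) (j-1)) = 4 * Tz i (j-1) := by
      rw [← Finset.mul_sum, shift1 i (j-1) m]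
      rw [← Tz_eq i (j-1) (by omega)]
    have hC : ∑ l ∈ Finset.range (m+1), Lz i l * Mz ((l:ℤ)-2) (j-1) = Uz i (j-1) := by
      rw [sum_stable (c := i+1) (fun l hl => by rw [lemA i l (by omega), zero_mul])
            (n := m+1) (m := m+2) (by omega) (by omega)]
      rw [shift2 i (j-1) m]
      rw [← Uz_eq i (j-1) (by omega)]
    have hD : ∑ l ∈ Finset.range (m+1), Lz i l * Mz ((l:ℤ)-2) (j-2) = Uz i (j-2) := by
      rw [sum_stable (c := i+1) (fun l hl => by rw [lemA i l (by omega), zero_mul])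
            (n := m+1) (m := m+2) (by omega) (by omega)]
      rw [shift2 i (j-2) m]
      rw [← Uz_eq i (j-2) (by omega)]
    have hE : ∑ l ∈ Finset.range (m+1), Lz i l * (dl l j 0 0 + dl l j 1 0)
        = (if j = 0 then Lz i 0 + Lz i 1 else 0) := by
      by_cases hj : j = 0
      · subst hj
        rw [if_pos rfl]
        exact S5lemma i hi
      · rw [if_neg hj]
        apply Finset.sum_eq_zero
        intro l _
        unfold dl
        simp [hj]
    rw [hA, hB, hC, hD, hE]

lemma Lz_negrow (k : ℤ) : Lz k (-1) = 0 := cfz_neg (by norm_num) fL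

lemma ZW : ∀ i : ℤ, ∀ j : ℤ, Zz i j = (if j = 0 then Lz i 0 + Lz i 1 else 0) := by
  refine int_ind _ ?_ ?_
  · intro i hi j
    rw [show Zz i j = 0 from cfz_neg (Or.inl hi) Yps,
        show Lz i 0 = 0 from cfz_neg (Or.inl hi) fL,
        show Lz i 1 = 0 from cfz_neg (Or.inl hi) fL]
    simp
  · intro i hi ih j
    rw [recZ, ih (i-1) (by omega) j, ih (i-2) (by omega) j]
    by_cases hj : j = 0
    · subst hj
      simp only [eq_self_iff_true, if_true]
      have a1 := recL i 0
      have a2 := recL i 1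
      have a4 := recL (i-1) 1
      have a5 := recL (i-2) 0
      rw [show (0:ℤ)-1 = -1 from by norm_num, Lz_negrow, Lz_negrow] at a1 a5
      rw [show (1:ℤ)-1 = 0 from by norm_num] at a2 a4
      have d2 : ∀ a : ℤ, dl i 1 a 0 = 0 := by
        intro a; unfold dl; simp
      have d4 : ∀ a : ℤ, dl (i-1) 1 a 0 = 0 := by
        intro a; unfold dl; simp
      rw [d2, d2, d2] at a2
      rw [d4, d4, d4] at a4
      rw [show i-1-1 = i-2 from by ring, show i-1-2 = i-3 from by ring] at a4
      rw [show i-2-1 = i-3 from by ring] at a5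
      have s1 : dl (i-2) 0 0 0 = dl i 0 2 0 := by
        unfold dl; split_ifs <;> first | rfl | (exfalso; omega)
      have s2 : dl (i-2) 0 1 0 = dl i 0 3 0 := by
        unfold dl; split_ifs <;> first | rfl | (exfalso; omega)
      have s3 : dl (i-2) 0 2 0 = dl i 0 4 0 := by
        unfold dl; split_ifs <;> first | rfl | (exfalso; omega)
      rw [s1, s2, s3] at a5
      linear_combination -a1 - a2 + a4 - a5
    · simp only [if_neg hj]
      have dj : ∀ a : ℤ, dl i j a 0 = 0 := by
        intro a; unfold dl; simp [hj]
      rw [dj, dj, dj, dj]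
      ring

lemma recPfull (i j : ℤ) :
    Pz i j = Pz i (j-1) + 4 * Qz i (j-1) + Rz i (j-1) - Rz i (j-2)
      + (if j = 0 then Lz i 0 + Lz i 1 else 0) := by
  have h1 := Zz_eq i j
  have h2 := ZW i j
  linear_combination h2 - h1

lemma MAIN : ∀ j : ℤ, (∀ i, Sz i j = Pz i j) ∧ (∀ i, Tz i j = Qz i j) ∧ (∀ i, Uz i j = Rz i j) := by
  refine int_ind _ ?_ ?_
  · intro j hj
    have hM : ∀ l : ℕ, ∀ i : ℤ, Lz i l * Mz l j = 0 := by
      intro l i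
      rw [show Mz l j = 0 from cfz_neg (Or.inr hj) fDT, mul_zero]
    refine ⟨fun i => ?_, fun i => ?_, fun i => ?_⟩
    · rw [show Pz i j = 0 from cfz_neg (Or.inr hj) g20V]
      exact Finset.sum_eq_zero fun l _ => hM l i
    · rw [show Qz i j = 0 from cfz_neg (Or.inr hj) G1]
      apply Finset.sum_eq_zero
      intro l _
      rw [show Mz l j = 0 from cfz_neg (Or.inr hj) fDT, mul_zero]
    · rw [show Rz i j = 0 from cfz_neg (Or.inr hj) G2]
      apply Finset.sum_eq_zero
      intro l _
      rw [show Mz l j = 0 from cfz_neg (Or.inr hj) fDT, mul_zero]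
  · intro j hj ih
    have hS : ∀ i, Sz i j = Pz i j := by
      intro i
      rw [recS i j, (ih (j-1) (by omega)).1 i, (ih (j-1) (by omega)).2.1 i,
          (ih (j-1) (by omega)).2.2 i, (ih (j-2) (by omega)).2.2 i]
      exact (recPfull i j).symm
    have hT : ∀ i, Tz i j = Qz i j := by
      refine int_ind _ ?_ ?_
      · intro i hi
        rw [Tz_zero_of_neg j hi, show Qz i j = 0 from cfz_neg (Or.inl hi) G1]
      · intro i hi ihi
        rw [recT i j, ihi (i-1) (by omega), hS (i-1), hS (i-2)]
        exact (recQ i j).symm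
    have hU : ∀ i, Uz i j = Rz i j := by
      refine int_ind _ ?_ ?_
      · intro i hi
        rw [Uz_zero_of_neg j hi, show Rz i j = 0 from cfz_neg (Or.inl hi) G2]
      · intro i hi ihi
        rw [recU i j, ihi (i-1) (by omega), hT (i-1), hT (i-2)]
        exact (recR i j).symm
    exact ⟨hS, hT, hU⟩

lemma Lz_cast (i j : ℕ) : Lz (i:ℤ) (j:ℤ) = cf i j fL := by
  unfold Lz cfz
  rw [if_pos ⟨Int.natCast_nonneg i, Int.natCast_nonneg j⟩]
  simp

lemma Mz_cast (i j : ℕ) : Mz (i:ℤ) (j:ℤ) = cf i j fDT := by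
  unfold Mz cfz
  rw [if_pos ⟨Int.natCast_nonneg i, Int.natCast_nonneg j⟩]
  simp

lemma Pz_cast (i j : ℕ) : Pz (i:ℤ) (j:ℤ) = cf i j g20V := by
  unfold Pz cfz
  rw [if_pos ⟨Int.natCast_nonneg i, Int.natCast_nonneg j⟩]
  simp

/-- `L` is lower triangular with unit diagonal, and `L · M = P`, where
`L_{i,j} = fL|_{u^i v^j}`, `M_{i,j} = f_DT|_{u^i v^j}`, `P_{i,j} = g_20V|_{u^i v^j}`. -/
theorem L_lowerTriangular_and_LM_eq_P :
    (∀ i j : ℕ, i < j → cf i j fL = 0) ∧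
    (∀ i : ℕ, cf i i fL = 1) ∧
    (∀ i j : ℕ, ∑ l ∈ Finset.range (i + 1), cf i l fL * cf l j fDT = cf i j g20V) := by
  refine ⟨fun i j h => ?_, fun i => ?_, fun i j => ?_⟩
  · rw [← Lz_cast]
    exact lemA i j (by exact_mod_cast h)
  · rw [← Lz_cast]
    exact lemB i (Int.natCast_nonneg i)
  · have h := (MAIN (j:ℤ)).1 (i:ℤ)
    rw [Pz_cast] at h
    rw [← h]
    unfold Sz
    rw [show ((i:ℤ)+1).toNat = i + 1 from by omega]
    apply Finset.sum_congr rfl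
    intro l _
    rw [← Lz_cast, ← Mz_cast]
end
end

section
/- For every n ≥ 1, det_{0≤i,j≤n−1}( 2^i · C(i+2j+1, 2j+1) − C(i−1, 2j+1) ) = det_{0≤i,j≤n−1}( g_20V(u,v)|_{u^i v^j} ), where C(·,·) is the binomial coefficient with the convention that C(i−1, 2j+1) = 0 when i = 0 (and more generally C(m,p) = 0 when m < p). -/
noncomputable section

namespace Aux
def d2 (i j : ℕ) : Fin 2 →₀ ℕ := Finsupp.single 0 i + Finsupp.single 1 j
lemma d2_apply0 (i j : ℕ) : d2 i j 0 = i := by simp [d2]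
lemma d2_apply1 (i j : ℕ) : d2 i j 1 = j := by simp [d2]
lemma eq_d2 (d : Fin 2 →₀ ℕ) : d = d2 (d 0) (d 1) := by
  ext x; fin_cases x <;> simp [d2]
lemma cf_eq (i j : ℕ) (f : PS) : cf i j f = MvPowerSeries.coeff (d2 i j) f := rfl

lemma d2_add (a b c d : ℕ) : d2 a b + d2 c d = d2 (a+c) (b+d) := by
  ext x; fin_cases x <;> simp [d2]

lemma cf_add (i j : ℕ) (f g : PS) : cf i j (f + g) = cf i j f + cf i j g :=
  map_add (MvPowerSeries.coeff _) f g

lemma cf_sub (i j : ℕ) (f g : PS) : cf i j (f - g) = cf i j f - cf i j g :=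
  map_sub (MvPowerSeries.coeff _) f g

lemma cf_sum {α : Type} (s : Finset α) (F : α → PS) (i j : ℕ) :
    cf i j (∑ t ∈ s, F t) = ∑ t ∈ s, cf i j (F t) :=
  map_sum (MvPowerSeries.coeff _) F s

/-- Convolution formula for `cf` of a product. -/
lemma cf_mul (i j : ℕ) (f g : PS) :
    cf i j (f * g) = ∑ a ∈ Finset.range (i+1), ∑ b ∈ Finset.range (j+1),
      cf a b f * cf (i-a) (j-b) g := by
  rw [cf_eq, MvPowerSeries.coeff_mul]
  rw [← Finset.sum_product']
  apply Finset.sum_bij' (fun p _ => ((p.1 0 : ℕ), (p.1 1 : ℕ)))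
    (fun q _ => ((d2 q.1 q.2, d2 (i - q.1) (j - q.2)) : (Fin 2 →₀ ℕ) × (Fin 2 →₀ ℕ)))
  · intro p hp
    rw [Finset.HasAntidiagonal.mem_antidiagonal] at hp
    have h0 : p.1 0 + p.2 0 = i := by
      have := congrArg (fun f => f 0) hp; simpa [d2_apply0] using this
    have h1 : p.1 1 + p.2 1 = j := by
      have := congrArg (fun f => f 1) hp; simpa [d2_apply1] using this
    simp only [Finset.mem_product, Finset.mem_range]
    omega
  · intro q hq
    simp only [Finset.mem_product, Finset.mem_range] at hq
    rw [Finset.HasAntidiagonal.mem_antidiagonal, d2_add]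
    congr 1 <;> omega
  · intro p hp
    rw [Finset.HasAntidiagonal.mem_antidiagonal] at hp
    have h0 : p.1 0 + p.2 0 = i := by
      have := congrArg (fun f => f 0) hp; simpa [d2_apply0] using this
    have h1 : p.1 1 + p.2 1 = j := by
      have := congrArg (fun f => f 1) hp; simpa [d2_apply1] using this
    have e1 : p.1 = d2 (p.1 0) (p.1 1) := eq_d2 _
    have e2 : p.2 = d2 (i - p.1 0) (j - p.1 1) := by
      rw [eq_d2 p.2]; congr 1 <;> omega
    exact Prod.ext e1.symm e2.symm
  · intro q hq
    simp [d2_apply0, d2_apply1]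
  · intro p hp
    rw [Finset.HasAntidiagonal.mem_antidiagonal] at hp
    have h0 : p.1 0 + p.2 0 = i := by
      have := congrArg (fun f => f 0) hp; simpa [d2_apply0] using this
    have h1 : p.1 1 + p.2 1 = j := by
      have := congrArg (fun f => f 1) hp; simpa [d2_apply1] using this
    have e2 : p.2 = d2 (i - p.1 0) (j - p.1 1) := by
      rw [eq_d2 p.2]; congr 1 <;> omega
    rw [cf_eq, cf_eq, ← eq_d2 p.1, ← e2]



-- new material
lemma cf_ext {f g : PS} (h : ∀ i j, cf i j f = cf i j g) : f = g := by
  ext d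
  have := h (d 0) (d 1)
  rwa [cf_eq, cf_eq, ← eq_d2] at this

lemma monomial_eq (a b : ℕ) : uu ^ a * vv ^ b = MvPowerSeries.monomial (d2 a b) 1 := by
  rw [uu, vv, MvPowerSeries.X_pow_eq, MvPowerSeries.X_pow_eq, MvPowerSeries.monomial_mul_monomial,
    one_mul, d2]

lemma d2_le_iff (a b i j : ℕ) : d2 a b ≤ d2 i j ↔ a ≤ i ∧ b ≤ j := by
  rw [Finsupp.le_iff]
  constructor
  · intro h
    constructor
    · by_cases ha : a = 0
      · omega
      · have := h 0 (by simp [d2, Finsupp.single_apply, ha]); simpa [d2_apply0] using this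
    · by_cases hb : b = 0
      · omega
      · have := h 1 (by simp [d2, Finsupp.single_apply, hb]); simpa [d2_apply1] using this
  · rintro ⟨h1, h2⟩ x _
    fin_cases x
    · simpa [d2_apply0] using h1
    · simpa [d2_apply1] using h2

lemma d2_sub (a b i j : ℕ) : d2 i j - d2 a b = d2 (i-a) (j-b) := by
  ext x; fin_cases x <;> simp [d2, Finsupp.single_apply]

lemma cf_mono_mul (a b i j : ℕ) (f : PS) :
    cf i j (uu ^ a * vv ^ b * f) = if a ≤ i ∧ b ≤ j then cf (i-a) (j-b) f else 0 := by
  rw [monomial_eq, cf_eq, MvPowerSeries.coeff_monomial_mul]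
  by_cases h : a ≤ i ∧ b ≤ j
  · rw [if_pos ((d2_le_iff a b i j).mpr h), if_pos h, d2_sub, one_mul, cf_eq]
  · rw [if_neg (fun hc => h ((d2_le_iff a b i j).mp hc)), if_neg h]

lemma cf_monomial (a b i j : ℕ) :
    cf i j (uu ^ a * vv ^ b) = if i = a ∧ j = b then 1 else 0 := by
  have := cf_mono_mul a b i j 1
  rw [mul_one] at this
  rw [this, cf_eq]
  by_cases h : a ≤ i ∧ b ≤ j
  · rw [if_pos h, MvPowerSeries.coeff_one]
    by_cases h2 : i = a ∧ j = b
    · rw [if_pos h2, if_pos]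
      have e1 : i - a = 0 := by omega
      have e2 : j - b = 0 := by omega
      rw [e1, e2]; ext x; fin_cases x <;> simp [d2]
    · rw [if_neg h2, if_neg]
      intro hd
      have hd0 := congrArg (fun f => f (0:Fin 2)) hd
      have hd1 := congrArg (fun f => f (1:Fin 2)) hd
      simp only [d2_apply0, d2_apply1, Finsupp.coe_zero, Pi.zero_apply] at hd0 hd1
      omega
  · rw [if_neg h, if_neg (by omega)]

lemma cf_one (i j : ℕ) : cf i j (1 : PS) = if i = 0 ∧ j = 0 then 1 else 0 := by
  have := cf_monomial 0 0 i j; simpa using this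

/-- explicit series from coefficient function -/
def mk2 (c : ℕ → ℕ → ℚ) : PS := fun d => c (d 0) (d 1)

lemma cf_mk2 (c : ℕ → ℕ → ℚ) (i j : ℕ) : cf i j (mk2 c) = c i j := by
  show (MvPowerSeries.coeff (d2 i j)) (mk2 c) = c i j
  have h : (MvPowerSeries.coeff (d2 i j)) (mk2 c) = c (d2 i j 0) (d2 i j 1) := rfl
  rw [h, d2_apply0, d2_apply1]

/-- `(1-u)⁻¹` as explicit series -/
def ib : PS := mk2 (fun _ j => if j = 0 then 1 else 0)

lemma uu_mul (f : PS) (i j : ℕ) : cf i j (uu * f) = if 1 ≤ i then cf (i-1) j f else 0 := by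
  have h : uu * f = uu^1 * vv^0 * f := by ring
  rw [h, cf_mono_mul]
  by_cases hi : 1 ≤ i
  · rw [if_pos ⟨hi, Nat.zero_le _⟩, if_pos hi, Nat.sub_zero]
  · rw [if_neg (by omega), if_neg hi]

lemma ib_mul : (1 - uu) * ib = 1 := by
  apply cf_ext
  intro i j
  rw [sub_mul, one_mul, cf_sub, uu_mul, cf_one, ib, cf_mk2, cf_mk2]
  split_ifs <;> simp_all

/-- series only involving `u` -/
def Uonly (f : PS) : Prop := ∀ i j, j ≠ 0 → cf i j f = 0

lemma Uonly.mul {f g : PS} (hf : Uonly f) (hg : Uonly g) : Uonly (f * g) := by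
  intro i j hj
  rw [cf_mul]
  apply Finset.sum_eq_zero
  intro a _
  apply Finset.sum_eq_zero
  intro b hb
  rcases Nat.eq_zero_or_pos b with hb0 | hb0
  · subst hb0
    rw [hg (i-a) (j-0) (by omega), mul_zero]
  · rw [hf a b (by omega), zero_mul]

lemma Uonly.pow {f : PS} (hf : Uonly f) (m : ℕ) (hm : 1 ≤ m) : Uonly (f ^ m) := by
  induction m with
  | zero => omega
  | succ m ih =>
    rcases Nat.eq_zero_or_pos m with h0 | h0
    · subst h0; simpa using hf
    · rw [pow_succ]; exact (ih h0).mul hf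

lemma Uonly_one : Uonly (1 : PS) := by
  intro i j hj; rw [cf_one, if_neg (by omega)]

lemma Uonly_one_add_uu : Uonly (1 + uu) := by
  intro i j hj
  rw [cf_add, cf_one, if_neg (by omega)]
  have h : uu = uu^1*vv^0 := by ring
  rw [h, cf_monomial, if_neg (by omega)]
  ring

lemma Uonly_ib : Uonly ib := by
  intro i j hj; rw [ib, cf_mk2, if_neg hj]

lemma sum_choose_shift (m i : ℕ) :
    ∑ a ∈ Finset.range (i+1), (a+m).choose m = (i+m+1).choose (m+1) := by
  induction i with
  | zero => simp
  | succ i ih =>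
    rw [Finset.sum_range_succ, ih]
    have h := Nat.choose_succ_succ' (i+m+1) m
    have e1 : i+1+m = i+m+1 := by omega
    rw [e1]
    omega

lemma cf_ib_pow (m i : ℕ) : cf i 0 (ib ^ (m+1)) = (Nat.choose (i+m) m : ℚ) := by
  induction m generalizing i with
  | zero => simp [ib, cf_mk2]
  | succ m ih =>
    rw [pow_succ, cf_mul]
    have h : ∀ a ∈ Finset.range (i+1), ∑ b ∈ Finset.range 1,
        cf a b (ib^(m+1)) * cf (i-a) (0-b) ib = (Nat.choose (a+m) m : ℚ) := by
      intro a _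
      rw [Finset.sum_range_one, ih, ib, cf_mk2, if_pos rfl, mul_one]
    rw [Finset.sum_congr rfl h, ← Nat.cast_sum, sum_choose_shift]
    norm_cast

lemma cf_one_add_uu_pow (M i : ℕ) : cf i 0 ((1 + uu)^M) = (Nat.choose M i : ℚ) := by
  have h : (1 + uu)^M = ∑ k ∈ Finset.range (M+1), uu^k * vv^0 * (Nat.choose M k : ℚ) • 1 := by
    rw [add_comm, add_pow]
    apply Finset.sum_congr rfl
    intro k _
    simp [mul_comm, Algebra.smul_def, MvPowerSeries.algebraMap_apply]
    try ring
  rw [h, cf_sum]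
  have h2 : ∀ k ∈ Finset.range (M+1),
      cf i 0 (uu^k * vv^0 * (Nat.choose M k : ℚ) • 1) = if i = k then (Nat.choose M k : ℚ) else 0 := by
    intro k _
    rw [cf_mono_mul]
    by_cases hik : k ≤ i
    · rw [if_pos ⟨hik, le_refl 0⟩]
      show (MvPowerSeries.coeff (d2 (i-k) (0-0))) _ = _
      rw [MvPowerSeries.coeff_smul]
      rw [← cf_eq, cf_one]
      by_cases he : i = k
      · rw [if_pos (by omega), if_pos he]; simp
      · rw [if_neg (by omega), if_neg he]; simp
    · rw [if_neg (by omega), if_neg (by omega)]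
  rw [Finset.sum_congr rfl h2]
  rw [Finset.sum_ite_eq]
  by_cases hi : i ≤ M
  · rw [if_pos (by simp; omega)]
  · rw [if_neg (by simp; omega), Nat.choose_eq_zero_of_lt (by omega), Nat.cast_zero]



def D1 : PS := 1 - uu^2 * vv
def D2 : PS := (1 - uu)^2 - vv * (1 + uu)^2
def Phi (t : ℕ) : PS := (1 + uu)^(2*t+2) * ib^(2*t+2)

lemma hsq : (1 - uu)^2 * ib^2 = 1 := by
  rw [← mul_pow, ib_mul, one_pow]

lemma tele (j : ℕ) :
    D2 * (∑ t ∈ Finset.range (j+1), vv^t * Phi t) =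
      (1 + uu)^2 - vv^(j+1) * ((1 + uu)^(2*j+4) * ib^(2*j+2)) := by
  induction j with
  | zero =>
    rw [Finset.sum_range_one]
    show D2 * (vv^0 * ((1+uu)^(2*0+2) * ib^(2*0+2))) = _
    rw [D2]
    ring_nf
    linear_combination ((1+uu)^2) * hsq
  | succ j ih =>
    rw [Finset.sum_range_succ, mul_add, ih]
    show _ + D2 * (vv^(j+1) * ((1+uu)^(2*(j+1)+2) * ib^(2*(j+1)+2))) = _
    rw [D2]
    linear_combination (vv^(j+1) * (1+uu)^(2*j+4) * ib^(2*j+2)) * hsq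

lemma constD2 : MvPowerSeries.constantCoeff D2 ≠ 0 := by
  rw [D2]
  simp [uu, vv]

lemma constD1 : MvPowerSeries.constantCoeff D1 ≠ 0 := by
  rw [D1]
  simp [uu, vv]

lemma cf_vv_mul (t i j : ℕ) (f : PS) :
    cf i j (vv^t * f) = if t ≤ j then cf i (j-t) f else 0 := by
  have h : vv^t * f = uu^0 * vv^t * f := by ring
  rw [h, cf_mono_mul]
  by_cases ht : t ≤ j
  · rw [if_pos ⟨Nat.zero_le _, ht⟩, if_pos ht, Nat.sub_zero]
  · rw [if_neg (by omega), if_neg ht]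

lemma Uonly_Phi (t : ℕ) : Uonly (Phi t) :=
  (Uonly_one_add_uu.pow _ (by omega)).mul (Uonly_ib.pow _ (by omega))

/-- coefficient of the `P`-part -/
def pc (i j : ℕ) : ℚ :=
  ∑ a ∈ Finset.range (i+1), (Nat.choose (2*j+2) a : ℚ) * (Nat.choose (i-a+2*j+1) (2*j+1) : ℚ)

lemma cf_Phi (i j : ℕ) : cf i 0 (Phi j) = pc i j := by
  rw [Phi, cf_mul, pc]
  apply Finset.sum_congr rfl
  intro a _
  rw [Finset.sum_range_one]
  have h : 2*j+2 = (2*j+1)+1 := by omega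
  rw [cf_one_add_uu_pow, h, cf_ib_pow]
  have h2 : i - a + (2*j+1) = i-a+2*j+1 := by omega
  rw [h2]

lemma cf_P (i j : ℕ) : cf i j ((1 + uu)^2 * D2⁻¹) = pc i j := by
  have hc : D2 * D2⁻¹ = 1 := MvPowerSeries.mul_inv_cancel _ constD2
  have T := tele j
  have key : (1 + uu)^2 * D2⁻¹ =
      (∑ t ∈ Finset.range (j+1), vv^t * Phi t) +
        vv^(j+1) * ((1 + uu)^(2*j+4) * ib^(2*j+2) * D2⁻¹) := by
    linear_combination (- D2⁻¹) * T + (∑ t ∈ Finset.range (j+1), vv^t * Phi t) * hc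
  rw [key, cf_add, cf_sum, cf_vv_mul, if_neg (by omega), add_zero]
  have h2 : ∀ t ∈ Finset.range (j+1), cf i j (vv^t * Phi t) =
      if t = j then pc i j else 0 := by
    intro t ht
    simp only [Finset.mem_range] at ht
    rw [cf_vv_mul, if_pos (by omega)]
    by_cases htj : t = j
    · rw [if_pos htj, htj, Nat.sub_self, cf_Phi]
    · rw [if_neg htj, Uonly_Phi t i (j-t) (by omega)]
  rw [Finset.sum_congr rfl h2, Finset.sum_ite_eq' (Finset.range (j+1)) j, if_pos (by simp)]

lemma geo1_mul : (mk2 (fun i j => if i = 2*j then 1 else 0)) * D1 = 1 := by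
  apply cf_ext
  intro i j
  rw [mul_comm, D1, sub_mul, one_mul, cf_sub, cf_one]
  have h : uu^2*vv * mk2 (fun i j => if i = 2*j then 1 else 0)
      = uu^2*vv^1 * mk2 (fun i j => if i = 2*j then 1 else 0) := by ring
  rw [h, cf_mono_mul, cf_mk2]
  by_cases hij : 2 ≤ i ∧ 1 ≤ j
  · rw [if_pos hij, cf_mk2]
    by_cases h1 : i = 2*j
    · rw [if_pos h1, if_pos (by omega), if_neg (by omega)]; ring
    · rw [if_neg h1, if_neg (by omega), if_neg (by omega)]; ring
  · rw [if_neg hij, sub_zero]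
    by_cases h1 : i = 2*j
    · rw [if_pos h1, if_pos (by omega)]
    · rw [if_neg h1, if_neg (by omega)]

lemma geo1_eq : D1⁻¹ = mk2 (fun i j => if i = 2*j then 1 else 0) :=
  ((MvPowerSeries.eq_inv_iff_mul_eq_one constD1).mpr geo1_mul).symm

lemma cf_Q (i j : ℕ) : cf i j (uu^2 * D1⁻¹) = if i = 2*j+2 then 1 else 0 := by
  rw [geo1_eq]
  have h : uu^2 * mk2 (fun i j => if i = 2*j then 1 else 0)
      = uu^2*vv^0 * mk2 (fun i j => if i = 2*j then 1 else 0) := by ring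
  rw [h, cf_mono_mul]
  by_cases hi : 2 ≤ i
  · rw [if_pos ⟨hi, Nat.zero_le _⟩, cf_mk2]
    by_cases h1 : i - 2 = 2*(j-0)
    · rw [if_pos h1, if_pos (by omega)]
    · rw [if_neg h1, if_neg (by omega)]
  · rw [if_neg (by omega), if_neg (by omega)]



lemma g20V_decomp : g20V = (1 + uu)^2 * D2⁻¹ - uu^2 * D1⁻¹ := by
  have hc1 : D1 * D1⁻¹ = 1 := MvPowerSeries.mul_inv_cancel _ constD1
  have hc2 : D2 * D2⁻¹ = 1 := MvPowerSeries.mul_inv_cancel _ constD2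
  rw [g20V, show ((1 - uu^2*vv) * ((1-uu)^2 - vv*(1+uu)^2)) = D1 * D2 from rfl,
    MvPowerSeries.mul_inv_rev]
  simp only [D1, D2] at hc1 hc2 ⊢
  linear_combination ((1+uu)^2 * ((1-uu)^2 - vv*(1+uu)^2)⁻¹) * hc1
    - (uu^2 * (1 - uu^2*vv)⁻¹) * hc2

lemma cf_g20V (i j : ℕ) :
    cf i j g20V = pc i j - (if i = 2*j+2 then 1 else 0) := by
  rw [g20V_decomp, cf_sub, cf_P, cf_Q]

open PowerSeries in
lemma ps_coeff_one_add_X_pow (M n : ℕ) :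
    PowerSeries.coeff n ((1 + PowerSeries.X)^M) = (Nat.choose M n : ℚ) := by
  rw [add_comm, add_pow, map_sum]
  have h : ∀ k ∈ Finset.range (M+1),
      PowerSeries.coeff n ((PowerSeries.X:ℚ⟦X⟧)^k * 1^(M-k) * (Nat.choose M k : ℚ⟦X⟧))
        = if n = k then (Nat.choose M k : ℚ) else 0 := by
    intro k _
    rw [one_pow, mul_one, ← map_natCast (PowerSeries.C (R := ℚ)) (Nat.choose M k), PowerSeries.coeff_X_pow_mul']
    by_cases hk : k ≤ n
    · rw [if_pos hk, PowerSeries.coeff_C]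
      by_cases he : n = k
      · rw [if_pos (by omega), if_pos he]
      · rw [if_neg (by omega), if_neg he]
    · rw [if_neg hk, if_neg (by omega)]
  rw [Finset.sum_congr rfl h, Finset.sum_ite_eq]
  by_cases hn : n ≤ M
  · rw [if_pos (by simp; omega)]
  · rw [if_neg (by simp; omega), Nat.choose_eq_zero_of_lt (by omega), Nat.cast_zero]

open PowerSeries in
lemma ps_coeff_inv (r n : ℕ) :
    PowerSeries.coeff n ((invOneSubPow ℚ (r+1) : ℚ⟦X⟧ˣ) : ℚ⟦X⟧) = (Nat.choose (n+r) r : ℚ) := by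
  simp [PowerSeries.invOneSubPow]
  rw [Nat.add_comm]

open PowerSeries in
lemma coeff_F (r k : ℕ) :
    PowerSeries.coeff k ((1 + PowerSeries.X)^(r+1) * ((invOneSubPow ℚ (r+1) : ℚ⟦X⟧ˣ) : ℚ⟦X⟧))
      = ∑ a ∈ Finset.range (k+1), (Nat.choose (r+1) a : ℚ) * (Nat.choose (k-a+r) r : ℚ) := by
  rw [PowerSeries.coeff_mul, Finset.Nat.sum_antidiagonal_eq_sum_range_succ_mk]
  apply Finset.sum_congr rfl
  intro a _
  rw [ps_coeff_one_add_X_pow, ps_coeff_inv]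

lemma choose_swap (i r a : ℕ) (ha : a ≤ i) :
    Nat.choose (i+r) a * Nat.choose (i-a+r) r = Nat.choose (i+r) r * Nat.choose i a := by
  have h := Nat.choose_mul (n := i + r) (show r ≤ i + r - a by omega)
  rw [Nat.choose_symm (show a ≤ i + r by omega)] at h
  have e1 : i + r - r = i := by omega
  have e2 : i + r - a - r = i - a := by omega
  rw [e1, e2, Nat.choose_symm ha] at h
  have h1 : i - a + r = i + r - a := by omega
  rw [h1]
  exact h

open PowerSeries in
lemma key_identity (i r : ℕ) (hi : 1 ≤ i) :
    ∑ k ∈ Finset.range (i+1), (if k = 0 then 0 else (Nat.choose (i-1) (k-1) : ℚ)) *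
      (∑ a ∈ Finset.range (k+1), (Nat.choose (r+1) a : ℚ) * (Nat.choose (k-a+r) r : ℚ))
    = 2^i * (Nat.choose (i+r) r : ℚ) := by
  set F : ℚ⟦X⟧ := (1 + PowerSeries.X)^(r+1) * ((invOneSubPow ℚ (r+1) : ℚ⟦X⟧ˣ) : ℚ⟦X⟧) with hF
  have step1 : ∀ k ∈ Finset.range (i+1),
      (if k = 0 then 0 else (Nat.choose (i-1) (k-1) : ℚ)) *
        (∑ a ∈ Finset.range (k+1), (Nat.choose (r+1) a : ℚ) * (Nat.choose (k-a+r) r : ℚ))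
      = PowerSeries.coeff k F * PowerSeries.coeff (i-k) ((1 + PowerSeries.X)^(i-1)) := by
    intro k hk
    simp only [Finset.mem_range] at hk
    rw [coeff_F, ps_coeff_one_add_X_pow]
    rcases Nat.eq_zero_or_pos k with h0 | h0
    · subst h0
      rw [if_pos rfl, Nat.sub_zero, Nat.choose_eq_zero_of_lt (by omega), Nat.cast_zero,
        mul_zero, zero_mul]
    · rw [if_neg (by omega), mul_comm]
      congr 2
      rw [← Nat.choose_symm (show i - k ≤ i - 1 by omega)]
      congr 1
      omega
  rw [Finset.sum_congr rfl step1]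
  have step3 : ∑ k ∈ Finset.range (i+1),
      PowerSeries.coeff k F * PowerSeries.coeff (i-k) ((1 + PowerSeries.X)^(i-1))
      = PowerSeries.coeff i (F * (1 + PowerSeries.X)^(i-1)) := by
    rw [PowerSeries.coeff_mul, Finset.Nat.sum_antidiagonal_eq_sum_range_succ_mk]
  rw [step3]
  have step4 : F * (1 + PowerSeries.X)^(i-1)
      = (1 + PowerSeries.X)^(i+r) * ((invOneSubPow ℚ (r+1) : ℚ⟦X⟧ˣ) : ℚ⟦X⟧) := by
    rw [hF]
    have : (r+1) + (i-1) = i + r := by omega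
    rw [mul_right_comm, ← pow_add, this]
  rw [step4]
  have step5 : PowerSeries.coeff i ((1 + PowerSeries.X)^(i+r) *
      ((invOneSubPow ℚ (r+1) : ℚ⟦X⟧ˣ) : ℚ⟦X⟧))
      = ∑ a ∈ Finset.range (i+1), (Nat.choose (i+r) a : ℚ) * (Nat.choose (i-a+r) r : ℚ) := by
    rw [PowerSeries.coeff_mul, Finset.Nat.sum_antidiagonal_eq_sum_range_succ_mk]
    apply Finset.sum_congr rfl
    intro a _
    rw [ps_coeff_one_add_X_pow, ps_coeff_inv]
  rw [step5]
  have step6 : ∀ a ∈ Finset.range (i+1),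
      (Nat.choose (i+r) a : ℚ) * (Nat.choose (i-a+r) r : ℚ)
      = (Nat.choose (i+r) r : ℚ) * (Nat.choose i a : ℚ) := by
    intro a ha
    simp only [Finset.mem_range] at ha
    rw [← Nat.cast_mul, ← Nat.cast_mul, choose_swap i r a (by omega)]
  rw [Finset.sum_congr rfl step6, ← Finset.mul_sum, ← Nat.cast_sum, Nat.sum_range_choose]
  push_cast
  ring



/-- ℕ-indexed entries of the transition matrix -/
def Lfun (I k : ℕ) : ℚ :=
  if k = 0 then (if I = 0 then 1 else 0)
  else if I = 0 then 0 else (Nat.choose (I-1) (k-1) : ℚ)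

/-- the unitriangular transition matrix -/
def Lmat (n : ℕ) : Matrix (Fin n) (Fin n) ℚ :=
  Matrix.of fun i k => Lfun (i:ℕ) (k:ℕ)

lemma det_Lmat (n : ℕ) : (Lmat n).det = 1 := by
  rw [Matrix.det_of_lowerTriangular]
  · apply Finset.prod_eq_one
    intro i _
    show Lfun (i:ℕ) (i:ℕ) = 1
    rw [Lfun]
    rcases Nat.eq_zero_or_pos (i:ℕ) with h0 | h0
    · rw [if_pos h0, if_pos h0]
    · rw [if_neg (by omega), if_neg (by omega), Nat.choose_self, Nat.cast_one]
  · intro i k hik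
    have h : (i:ℕ) < (k:ℕ) := hik
    show Lfun (i:ℕ) (k:ℕ) = 0
    rw [Lfun, if_neg (by omega)]
    rcases Nat.eq_zero_or_pos (i:ℕ) with h0 | h0
    · rw [if_pos h0]
    · rw [if_neg (by omega), Nat.choose_eq_zero_of_lt (by omega), Nat.cast_zero]

lemma key_pc (i j : ℕ) (hi : 1 ≤ i) :
    ∑ k ∈ Finset.range (i+1), (if k = 0 then 0 else (Nat.choose (i-1) (k-1) : ℚ)) * pc k j
      = 2^i * (Nat.choose (i+2*j+1) (2*j+1) : ℚ) := by
  have h := key_identity i (2*j+1) hi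
  have e1 : 2*j+1+1 = 2*j+2 := by omega
  rw [e1] at h
  have e2 : ∀ x:ℕ, x + (2*j+1) = x+2*j+1 := fun x => by omega
  simp only [e2] at h
  simp only [pc]
  exact h

lemma hS1 (n : ℕ) (hn : 1 ≤ n) (I J : ℕ) (hI : I < n) :
    ∑ k ∈ Finset.range n, Lfun I k * pc k J
      = 2^I * (Nat.choose (I+2*J+1) (2*J+1) : ℚ) := by
  rcases Nat.eq_zero_or_pos I with h0 | h0
  · subst h0
    have h : ∀ k ∈ Finset.range n, Lfun 0 k * pc k J
        = if k = 0 then pc k J else 0 := by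
      intro k _
      rw [Lfun]
      by_cases hk : k = 0
      · rw [if_pos hk, if_pos rfl, if_pos hk, one_mul]
      · rw [if_neg hk, if_pos rfl, if_neg hk, zero_mul]
    rw [Finset.sum_congr rfl h, Finset.sum_ite_eq' (Finset.range n) 0, if_pos (by simp; omega)]
    rw [pc, Finset.sum_range_one, pow_zero, one_mul]
    simp [Nat.choose_self]
  · rw [← Finset.sum_subset (Finset.range_subset_range.mpr (show I+1 ≤ n by omega))
      (fun k hk hk2 => by
        simp only [Finset.mem_range] at hk hk2
        rw [Lfun, if_neg (by omega), if_neg (by omega),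
          Nat.choose_eq_zero_of_lt (by omega), Nat.cast_zero, zero_mul])]
    have h : ∀ k ∈ Finset.range (I+1), Lfun I k * pc k J
        = (if k = 0 then 0 else (Nat.choose (I-1) (k-1) : ℚ)) * pc k J := by
      intro k _
      rw [Lfun]
      by_cases hk : k = 0
      · rw [if_pos hk, if_neg (by omega), if_pos hk]
      · rw [if_neg hk, if_neg (by omega), if_neg hk]
    rw [Finset.sum_congr rfl h, key_pc I J h0]

lemma hS2 (n : ℕ) (hn : 1 ≤ n) (I J : ℕ) (hI : I < n) :
    ∑ k ∈ Finset.range n, Lfun I k * (if k = 2*J+2 then 1 else 0)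
      = (Nat.choose (I-1) (2*J+1) : ℚ) := by
  have h : ∀ k ∈ Finset.range n, Lfun I k * (if k = 2*J+2 then 1 else 0)
      = if k = 2*J+2 then Lfun I k else 0 := by
    intro k _
    by_cases hk : k = 2*J+2
    · rw [if_pos hk, if_pos hk, mul_one]
    · rw [if_neg hk, if_neg hk, mul_zero]
  rw [Finset.sum_congr rfl h, Finset.sum_ite_eq' (Finset.range n) (2*J+2)]
  by_cases hm : 2*J+2 < n
  · rw [if_pos (by simp; omega), Lfun, if_neg (by omega)]
    rcases Nat.eq_zero_or_pos I with h0 | h0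
    · rw [if_pos h0, h0]
      rw [show (0:ℕ)-1 = 0 from rfl, Nat.choose_eq_zero_of_lt (by omega), Nat.cast_zero]
    · rw [if_neg (by omega)]
      have e : 2*J+2-1 = 2*J+1 := by omega
      rw [e]
  · rw [if_neg (by simp; omega), Nat.choose_eq_zero_of_lt (by omega), Nat.cast_zero]

lemma entry_eq (n : ℕ) (hn : 1 ≤ n) (i j : Fin n) :
    (2 ^ (i : ℕ) * (((i : ℕ) + 2 * (j : ℕ) + 1).choose (2 * (j : ℕ) + 1)) : ℚ) -
        ((((i : ℕ) - 1).choose (2 * (j : ℕ) + 1)) : ℚ)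
      = ∑ k : Fin n, Lmat n i k * cf k j g20V := by
  have h1 : ∀ k : Fin n, Lmat n i k * cf (k:ℕ) (j:ℕ) g20V
      = Lfun (i:ℕ) (k:ℕ) * pc (k:ℕ) (j:ℕ)
        - Lfun (i:ℕ) (k:ℕ) * (if (k:ℕ) = 2*(j:ℕ)+2 then 1 else 0) := by
    intro k
    rw [show Lmat n i k = Lfun (i:ℕ) (k:ℕ) from rfl, cf_g20V, mul_sub]
  rw [Finset.sum_congr rfl (fun k _ => h1 k), Finset.sum_sub_distrib]
  rw [Fin.sum_univ_eq_sum_range (fun k => Lfun (i:ℕ) k * pc k (j:ℕ)) n,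
    Fin.sum_univ_eq_sum_range
      (fun k => Lfun (i:ℕ) k * (if k = 2*(j:ℕ)+2 then 1 else 0)) n]
  rw [hS1 n hn (i:ℕ) (j:ℕ) i.isLt, hS2 n hn (i:ℕ) (j:ℕ) i.isLt]

end Aux

/-- The binomial determinant formula for the 20V DWBC3 partition function:
`det_{0≤i,j≤n-1}( 2^i·C(i+2j+1, 2j+1) - C(i-1, 2j+1) ) = det_{0≤i,j≤n-1}( g_20V|_{u^i v^j} )`.
Here `C(m,p) = 0` when `m < p` (in particular `C(i-1, 2j+1) = 0` when `i = 0`,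
with `i - 1` the truncated subtraction). -/
theorem det_binomial_eq_det_g20V (n : ℕ) (hn : 1 ≤ n) :
    Matrix.det (Matrix.of fun i j : Fin n =>
      (2 ^ (i : ℕ) * (((i : ℕ) + 2 * (j : ℕ) + 1).choose (2 * (j : ℕ) + 1)) : ℚ) -
        ((((i : ℕ) - 1).choose (2 * (j : ℕ) + 1)) : ℚ)) =
    Matrix.det (Matrix.of fun i j : Fin n => cf i j g20V) := by
  have hA : (Matrix.of fun i j : Fin n =>
      (2 ^ (i : ℕ) * (((i : ℕ) + 2 * (j : ℕ) + 1).choose (2 * (j : ℕ) + 1)) : ℚ) -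
        ((((i : ℕ) - 1).choose (2 * (j : ℕ) + 1)) : ℚ))
      = Aux.Lmat n * (Matrix.of fun i j : Fin n => cf i j g20V) := by
    ext i j
    rw [Matrix.mul_apply]
    simp only [Matrix.of_apply]
    exact Aux.entry_eq n hn i j
  rw [hA, Matrix.det_mul, Aux.det_Lmat, one_mul]
end
end

section
/- For every n ≥ 1, the following identity holds in ℝ: det_{0≤i,j≤n−1}( g_20V(u,v)|_{u^i v^j} ) = (2^{n(n−1)/4} / 2) · det_{0≤i,j≤n−1}( θ_{2j+1}(i) + θ_{2j+1}(−i) ), where for a real number x and a positive integer m, θ_m(x) := (2^{x/2}/m!) · (x+1)(x+2)···(x+m). -/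
noncomputable section

/-- `θ_m(x) = (2^{x/2}/m!)·(x+1)(x+2)···(x+m)`, with `2^{x/2}` the real power. -/
def theta (m : ℕ) (x : ℝ) : ℝ :=
  (2 : ℝ) ^ (x / 2) / (m.factorial : ℝ) * ∏ k ∈ Finset.range m, (x + (k : ℝ) + 1)


noncomputable section
namespace Vertex20

open PowerSeries Finset

abbrev R1 : Type := PowerSeries ℚ

/-- `J = 1/(1+X)` -/
def J : R1 := PowerSeries.mk fun t => (-1)^t

lemma one_add_X_mul_J : ((1 : R1) + PowerSeries.X) * J = 1 := by
  ext k
  rw [add_mul, one_mul, map_add]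
  cases k with
  | zero => simp [J]
  | succ k => simp [J, PowerSeries.coeff_succ_X_mul, PowerSeries.coeff_mk, pow_succ]

/-- `T = X/(1+X)` -/
def T : R1 := PowerSeries.X * J

lemma one_add_X_mul_T : ((1 : R1) + PowerSeries.X) * T = PowerSeries.X := by
  rw [T, ← mul_assoc, mul_comm ((1:R1) + PowerSeries.X) PowerSeries.X, mul_assoc,
    one_add_X_mul_J, mul_one]

lemma constantCoeff_T : PowerSeries.constantCoeff T = 0 := by
  simp [T]

lemma coeff_T_pow_of_lt {i k : ℕ} (h : i < k) : PowerSeries.coeff i (T ^ k) = 0 := by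
  have hdvd : (PowerSeries.X : R1) ^ k ∣ T ^ k :=
    pow_dvd_pow_of_dvd (PowerSeries.X_dvd_iff.2 constantCoeff_T) k
  exact PowerSeries.X_pow_dvd_iff.mp hdvd i h

lemma coeff_T_pow_self (i : ℕ) : PowerSeries.coeff i (T ^ i) = 1 := by
  rw [T, mul_pow, PowerSeries.coeff_X_pow_mul' ]
  simp only [le_refl, if_pos, Nat.sub_self]
  rw [PowerSeries.coeff_zero_eq_constantCoeff, map_pow]
  simp [J, PowerSeries.constantCoeff_mk]

/-- `Φ c = ∑ₖ c k • T^k` -/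
def Phi (c : ℕ → ℚ) : R1 :=
  PowerSeries.mk fun i => ∑ k ∈ range (i+1), c k * PowerSeries.coeff i (T ^ k)

lemma coeff_Phi (c : ℕ → ℚ) {i N : ℕ} (hN : i < N) :
    PowerSeries.coeff i (Phi c) = ∑ k ∈ range N, c k * PowerSeries.coeff i (T ^ k) := by
  rw [Phi, PowerSeries.coeff_mk]
  apply Finset.sum_subset
  · exact Finset.range_subset_range.2 hN
  · intro k _ hk
    rw [coeff_T_pow_of_lt (by simpa using hk), mul_zero]

lemma Phi_single (l : ℕ) : Phi (fun k => if k = l then 1 else 0) = T ^ l := by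
  ext i
  rcases lt_or_ge i l with h | h
  · rw [coeff_Phi _ (Nat.lt_succ_self i), coeff_T_pow_of_lt h]
    apply Finset.sum_eq_zero
    intro k hk
    rcases eq_or_ne k l with rfl | hne
    · exact absurd (Finset.mem_range.1 hk) (by omega)
    · simp [hne]
  · rw [coeff_Phi _ (Nat.lt_succ_self i)]
    rw [Finset.sum_eq_single l]
    · simp
    · intro k _ hne; simp [hne]
    · intro hmem; exact absurd (Finset.mem_range.2 (Nat.lt_succ_of_le h)) hmem

lemma Phi_zero : Phi (fun _ => 0) = 0 := by
  ext i; rw [coeff_Phi _ (Nat.lt_succ_self i)]; simp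

lemma Phi_add (c c' : ℕ → ℚ) : Phi (fun k => c k + c' k) = Phi c + Phi c' := by
  ext i
  rw [map_add, coeff_Phi _ (Nat.lt_succ_self i), coeff_Phi c (Nat.lt_succ_self i),
    coeff_Phi c' (Nat.lt_succ_self i), ← Finset.sum_add_distrib]
  exact Finset.sum_congr rfl fun k _ => by ring

lemma Phi_sub (c c' : ℕ → ℚ) : Phi (fun k => c k - c' k) = Phi c - Phi c' := by
  have h := Phi_add (fun k => c k - c' k) c'
  simp only [sub_add_cancel] at h
  rw [h]; ring

lemma Phi_smul (a : ℚ) (c : ℕ → ℚ) :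
    Phi (fun k => a * c k) = PowerSeries.C a * Phi c := by
  ext i
  rw [PowerSeries.coeff_C_mul, coeff_Phi _ (Nat.lt_succ_self i),
    coeff_Phi c (Nat.lt_succ_self i), Finset.mul_sum]
  exact Finset.sum_congr rfl fun k _ => by ring

/-- shift of a sequence -/
def sh (c : ℕ → ℚ) : ℕ → ℚ := fun k => if 1 ≤ k then c (k-1) else 0

lemma T_mul_Phi (c : ℕ → ℚ) : T * Phi c = Phi (sh c) := by
  ext i
  rw [PowerSeries.coeff_mul, Finset.Nat.sum_antidiagonal_eq_sum_range_succ_mk]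
  have step1 : ∀ p ∈ range (i+1), PowerSeries.coeff p T *
      PowerSeries.coeff (i - p) (Phi c)
      = ∑ k ∈ range (i+1), c k * (PowerSeries.coeff p T *
          PowerSeries.coeff (i-p) (T ^ k)) := by
    intro p hp
    rw [coeff_Phi c (show i - p < i + 1 by omega), Finset.mul_sum]
    exact Finset.sum_congr rfl fun k _ => by ring
  rw [Finset.sum_congr rfl step1, Finset.sum_comm]
  have step2 : ∀ k ∈ range (i+1),
      ∑ p ∈ range (i+1), c k * (PowerSeries.coeff p T *
        PowerSeries.coeff (i-p) (T ^ k))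
      = c k * PowerSeries.coeff i (T ^ (k+1)) := by
    intro k _
    rw [← Finset.mul_sum]
    congr 1
    rw [pow_succ, mul_comm (T^k) T, PowerSeries.coeff_mul,
      Finset.Nat.sum_antidiagonal_eq_sum_range_succ_mk]
  rw [Finset.sum_congr rfl step2]
  -- now RHS
  rw [coeff_Phi (sh c) (show i < i + 2 by omega)]
  conv_rhs => rw [Finset.sum_range_succ']
  have h0 : sh c 0 * PowerSeries.coeff i (T ^ 0) = 0 := by simp [sh]
  rw [h0, add_zero]
  have h1 : ∀ k ∈ range (i+1), sh c (k+1) * PowerSeries.coeff i (T ^ (k+1))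
      = c k * PowerSeries.coeff i (T ^ (k+1)) := by
    intro k _; simp [sh]
  rw [Finset.sum_congr rfl h1]

end Vertex20
namespace Vertex20
open PowerSeries Finset

lemma Phi_congr {c c' : ℕ → ℚ} (h : ∀ k, c k = c' k) : Phi c = Phi c' :=
  congrArg Phi (funext h)

lemma one_sub_CaT_mul_Phi (a : ℚ) (c : ℕ → ℚ) :
    ((1 : R1) - PowerSeries.C a * T) * Phi c = Phi (fun k => c k - a * sh c k) := by
  rw [Phi_sub, sub_mul, one_mul, mul_assoc, T_mul_Phi, ← Phi_smul]

lemma geom (a : ℚ) (m : ℕ) :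
    ((1 : R1) - PowerSeries.C a * T) ^ (m+1) *
      Phi (fun k => a ^ k * ((k+m).choose m : ℚ)) = 1 := by
  induction m with
  | zero =>
    rw [pow_one, one_sub_CaT_mul_Phi]
    have h : Phi (fun k => a ^ k * (((k+0).choose 0 : ℕ) : ℚ)
        - a * sh (fun k => a ^ k * (((k+0).choose 0 : ℕ) : ℚ)) k)
        = Phi (fun k => if k = 0 then 1 else 0) := by
      apply Phi_congr
      intro k
      cases k with
      | zero => simp [sh]
      | succ k =>
        simp only [sh, if_pos (by omega : 1 ≤ k + 1), Nat.add_sub_cancel,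
          Nat.choose_zero_right, Nat.cast_one, mul_one, if_neg (Nat.succ_ne_zero k)]
        rw [pow_succ]; ring
    rw [h, Phi_single, pow_zero]
  | succ m ih =>
    have hstep : ((1 : R1) - PowerSeries.C a * T) *
        Phi (fun k => a ^ k * ((k+(m+1)).choose (m+1) : ℚ))
        = Phi (fun k => a ^ k * ((k+m).choose m : ℚ)) := by
      rw [one_sub_CaT_mul_Phi]
      apply Phi_congr
      intro k
      cases k with
      | zero => simp [sh]
      | succ k =>
        simp only [sh, if_pos (by omega : 1 ≤ k + 1), Nat.add_sub_cancel]
        have e1 : k + 1 + (m + 1) = (k + m + 1) + 1 := by omega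
        have e2 : k + (m + 1) = k + m + 1 := by omega
        have e3 : k + 1 + m = k + m + 1 := by omega
        rw [e1, e2, e3, Nat.choose_succ_succ' (k + m + 1) m]
        push_cast
        rw [pow_succ]
        ring
    rw [pow_succ, mul_assoc, hstep, ih]

lemma C_two_eq : (PowerSeries.C) 2 = (2 : R1) := by
  simp [map_ofNat]

lemma one_add_X_mul_one_sub_two_T :
    ((1 : R1) + PowerSeries.X) * (1 - PowerSeries.C 2 * T)
      = 1 - PowerSeries.X := by
  rw [C_two_eq, mul_sub, mul_one, mul_comm (2 : R1) T, ← mul_assoc,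
    mul_comm (((1:R1) + PowerSeries.X)) T, mul_comm T _, one_add_X_mul_T]
  ring

/-- the series `a_m = ((1+X)/(1-X))^(m+1)` -/
def Am (m : ℕ) : R1 := Phi (fun k => 2 ^ k * ((k+m).choose m : ℚ))

lemma key1 (m : ℕ) :
    ((1 : R1) - PowerSeries.X) ^ (m+1) * Am m = ((1 : R1) + PowerSeries.X) ^ (m+1) := by
  have h := geom 2 m
  calc ((1 : R1) - PowerSeries.X) ^ (m+1) * Am m
      = ((1 : R1) + PowerSeries.X) ^ (m+1) *
          (((1 : R1) - PowerSeries.C 2 * T) ^ (m+1) * Am m) := by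
        rw [← mul_assoc, ← mul_pow, one_add_X_mul_one_sub_two_T]
    _ = ((1 : R1) + PowerSeries.X) ^ (m+1) := by rw [Am] at *; rw [h, mul_one]

lemma one_add_X_mul_one_sub_T :
    ((1 : R1) + PowerSeries.X) * (1 - T) = 1 := by
  rw [mul_sub, mul_one, one_add_X_mul_T]; ring

lemma Phi_bm1 (m : ℕ) :
    Phi (fun k => ((k+m).choose m : ℚ)) = ((1 : R1) + PowerSeries.X) ^ (m+1) := by
  have h := geom 1 m
  simp only [one_pow, one_mul, map_one] at h
  calc Phi (fun k => ((k+m).choose m : ℚ))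
      = ((1 : R1) + PowerSeries.X) ^ (m+1) *
          (((1:R1) - 1 * T) ^ (m+1) * Phi (fun k => ((k+m).choose m : ℚ))) := by
        rw [one_mul, ← mul_assoc, ← mul_pow, one_add_X_mul_one_sub_T, one_pow, one_mul]
    _ = ((1 : R1) + PowerSeries.X) ^ (m+1) := by rw [one_mul, h, mul_one]

lemma T_pow_mul_Phi (l : ℕ) (c : ℕ → ℚ) : T ^ l * Phi c = Phi (sh^[l] c) := by
  induction l generalizing c with
  | zero => simp
  | succ l ih =>
    rw [pow_succ', mul_assoc, ih, T_mul_Phi, Function.iterate_succ_apply']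

lemma sh_iterate (l : ℕ) (c : ℕ → ℚ) (k : ℕ) :
    (sh^[l] c) k = if l ≤ k then c (k - l) else 0 := by
  induction l generalizing k with
  | zero => simp
  | succ l ih =>
    rw [Function.iterate_succ_apply', sh]
    rcases Nat.lt_or_ge k 1 with h | h
    · have : ¬ (l + 1 ≤ k) := by omega
      simp [if_neg (by omega : ¬ (1:ℕ) ≤ k), this]
    · rw [if_pos h, ih]
      by_cases h2 : l ≤ k - 1
      · rw [if_pos h2, if_pos (by omega), Nat.sub_sub, Nat.add_comm l 1]
      · rw [if_neg h2, if_neg (by omega)]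

/-- `∑ C(k-1,m) T^k = X^(m+1)` for `m ≥ 1` -/
lemma Phi_cm (m : ℕ) (hm : 1 ≤ m) :
    Phi (fun k => ((k-1).choose m : ℚ)) = PowerSeries.X ^ (m+1) := by
  have h1 : Phi (fun k => ((k-1).choose m : ℚ))
      = Phi (sh^[m+1] (fun k => ((k+m).choose m : ℚ))) := by
    apply Phi_congr
    intro k
    rw [sh_iterate]
    by_cases h : m + 1 ≤ k
    · rw [if_pos h]
      congr 2
      omega
    · rw [if_neg h, Nat.choose_eq_zero_of_lt (by omega), Nat.cast_zero]
  rw [h1, ← T_pow_mul_Phi, Phi_bm1, ← mul_pow, mul_comm T _, one_add_X_mul_T]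

end Vertex20
namespace Vertex20
open PowerSeries Finset

lemma one_sub_X_ne : ((1:R1) - PowerSeries.X) ≠ 0 := by
  intro h
  have := congrArg (PowerSeries.constantCoeff) h
  simp at this

lemma ID1 (m : ℕ) :
    ((1:R1) - PowerSeries.X)^2 * Am (m+2) = ((1:R1) + PowerSeries.X)^2 * Am m := by
  apply mul_left_cancel₀ (pow_ne_zero (m+1) one_sub_X_ne)
  calc ((1:R1) - PowerSeries.X)^(m+1) * (((1:R1) - PowerSeries.X)^2 * Am (m+2))
      = ((1:R1) - PowerSeries.X)^(m+3) * Am (m+2) := by ring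
    _ = ((1:R1) + PowerSeries.X)^(m+3) := key1 (m+2)
    _ = ((1:R1) - PowerSeries.X)^(m+1) * (((1:R1) + PowerSeries.X)^2 * Am m) := by
        rw [← mul_assoc, mul_comm (((1:R1) - PowerSeries.X)^(m+1)) _, mul_assoc, key1 m]
        ring

lemma ID2 : ((1:R1) - PowerSeries.X)^2 * Am 1 = ((1:R1) + PowerSeries.X)^2 := key1 1

/-- second difference coefficient extraction -/
lemma coeff_one_sub_X_sq (f : R1) (i : ℕ) :
    PowerSeries.coeff i (((1:R1) - PowerSeries.X)^2 * f)
      = PowerSeries.coeff i f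
        - 2 * (if 1 ≤ i then PowerSeries.coeff (i-1) f else 0)
        + (if 2 ≤ i then PowerSeries.coeff (i-2) f else 0) := by
  have h : ((1:R1) - PowerSeries.X)^2 * f
      = f - PowerSeries.X^1 * f - PowerSeries.X^1 * f + PowerSeries.X^2 * f := by ring
  rw [h, map_add, map_sub, map_sub, PowerSeries.coeff_X_pow_mul',
    PowerSeries.coeff_X_pow_mul' f 2 i]
  ring

lemma coeff_one_add_X_sq (f : R1) (i : ℕ) :
    PowerSeries.coeff i (((1:R1) + PowerSeries.X)^2 * f)
      = PowerSeries.coeff i f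
        + 2 * (if 1 ≤ i then PowerSeries.coeff (i-1) f else 0)
        + (if 2 ≤ i then PowerSeries.coeff (i-2) f else 0) := by
  have h : ((1:R1) + PowerSeries.X)^2 * f
      = f + PowerSeries.X^1 * f + PowerSeries.X^1 * f + PowerSeries.X^2 * f := by ring
  rw [h, map_add, map_add, map_add, PowerSeries.coeff_X_pow_mul',
    PowerSeries.coeff_X_pow_mul' f 2 i]
  ring

/-- coefficient of the series `A` at `(i,j)`. -/
def al (i j : ℕ) : ℚ := PowerSeries.coeff i (Am (2*j+1))

lemma scalarA1 (i : ℕ) :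
    al i 0 - 2 * (if 1 ≤ i then al (i-1) 0 else 0) + (if 2 ≤ i then al (i-2) 0 else 0)
      = ((if i = 0 then 1 else 0) + 2 * (if i = 1 then 1 else 0)
          + (if i = 2 then 1 else 0) : ℚ) := by
  have h := congrArg (PowerSeries.coeff i) ID2
  rw [coeff_one_sub_X_sq] at h
  have h2 : PowerSeries.coeff i (((1:R1) + PowerSeries.X)^2)
      = (if i = 0 then 1 else 0) + 2 * (if i = 1 then 1 else 0)
          + (if i = 2 then 1 else 0) := by
    rw [← mul_one (((1:R1) + PowerSeries.X)^2), coeff_one_add_X_sq]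
    simp only [map_one, PowerSeries.coeff_one]
    rcases i with _ | _ | _ | i <;>
      first
      | (norm_num; done)
      | (norm_num; split_ifs <;> simp_all <;> omega)
  rw [h2] at h
  exact h

lemma scalarA2 (i j : ℕ) :
    al i (j+1) - 2 * (if 1 ≤ i then al (i-1) (j+1) else 0)
        + (if 2 ≤ i then al (i-2) (j+1) else 0)
      = al i j + 2 * (if 1 ≤ i then al (i-1) j else 0)
        + (if 2 ≤ i then al (i-2) j else 0) := by
  have e : 2*(j+1)+1 = (2*j+1) + 2 := by omega
  have h := congrArg (PowerSeries.coeff i) (ID1 (2*j+1))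
  rw [coeff_one_sub_X_sq, coeff_one_add_X_sq] at h
  simpa [al, e] using h

lemma al_zero (j : ℕ) : al 0 j = 1 := by
  rw [al, Am, coeff_Phi _ (Nat.lt_succ_self 0)]
  simp

end Vertex20
namespace Vertex20
open PowerSeries Finset

lemma H1 (m k : ℕ) :
    ∏ l ∈ range m, ((k:ℚ) + l + 1) = ((k+m).choose m : ℚ) * m.factorial := by
  induction m with
  | zero => simp
  | succ m ih =>
    rw [Finset.prod_range_succ, ih]
    have hnat : (k + m + 1) * (k+m).choose m = (k+m+1).choose (m+1) * (m+1) := by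
      simpa [Nat.succ_eq_add_one] using Nat.add_one_mul_choose_eq (k+m) m
    have hq : ((k:ℚ) + m + 1) * ((k+m).choose m : ℚ)
        = ((k+m+1).choose (m+1) : ℚ) * (m+1) := by
      exact_mod_cast congrArg (Nat.cast : ℕ → ℚ) hnat
    have e : k + (m+1) = k + m + 1 := by omega
    rw [e, Nat.factorial_succ]
    push_cast
    nlinarith [hq]

lemma H2 (m x : ℕ) :
    ∏ l ∈ range m, ((x:ℚ) - l) = (x.choose m : ℚ) * m.factorial := by
  induction m with
  | zero => simp
  | succ m ih =>
    rw [Finset.prod_range_succ, ih]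
    rcases le_or_gt m x with h | h
    · have hnat : x.choose (m+1) * (m+1) = x.choose m * (x - m) := Nat.choose_succ_right_eq x m
      have hq : (x.choose (m+1) : ℚ) * (m+1) = (x.choose m : ℚ) * ((x:ℚ) - m) := by
        rw [show ((x:ℚ) - m) = ((x - m : ℕ) : ℚ) by push_cast [Nat.cast_sub h]; ring]
        exact_mod_cast congrArg (Nat.cast : ℕ → ℚ) hnat
      rw [Nat.factorial_succ]
      push_cast
      nlinarith [hq]
    · rw [Nat.choose_eq_zero_of_lt h, Nat.choose_eq_zero_of_lt (by omega)]
      simp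

lemma H3 (m k : ℕ) (hm : Odd m) (hk : 1 ≤ k) :
    ∏ l ∈ range m, ((l:ℚ) + 1 - k) = -(((k-1).choose m : ℚ)) * m.factorial := by
  have e : ∀ l ∈ range m, ((l:ℚ) + 1 - k) = (-1) * (((k-1:ℕ):ℚ) - l) := by
    intro l _
    rw [Nat.cast_sub hk]
    push_cast
    ring
  rw [Finset.prod_congr rfl e, Finset.prod_mul_distrib, Finset.prod_const, Finset.card_range, H2, hm.neg_one_pow]
  ring

/-- entries of the `B` matrix -/
def bq (k j : ℕ) : ℚ :=
  (∏ l ∈ range (2*j+1), ((k:ℚ) + l + 1)) / (2*j+1).factorial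
    + (∏ l ∈ range (2*j+1), ((l:ℚ) + 1 - k)) / ((2*j+1).factorial * 2^k)

lemma factorial_ne (m : ℕ) : ((m.factorial : ℚ)) ≠ 0 := by
  exact_mod_cast m.factorial_ne_zero

lemma bq_eq (k j : ℕ) (hk : 1 ≤ k) :
    bq k j = ((k+(2*j+1)).choose (2*j+1) : ℚ) - (((k-1).choose (2*j+1) : ℚ)) / 2^k := by
  rw [bq, H1, H3 _ _ ⟨j, by omega⟩ hk]
  have h2 : ((2:ℚ)^k) ≠ 0 := by positivity
  field_simp
  ring

lemma bq_zero (j : ℕ) : bq 0 j = 2 := by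
  have e : ∀ l ∈ range (2*j+1), ((l:ℚ) + 1 - ((0:ℕ):ℚ)) = ((0:ℕ):ℚ) + l + 1 := by
    intro l _; push_cast; ring
  rw [bq, Finset.prod_congr rfl e, H1, Nat.zero_add, Nat.choose_self]
  push_cast
  rw [pow_zero]
  field_simp
  norm_num

/-- coefficient of `g20V` at `(i,j)` -/
def e20 (i j : ℕ) : ℚ := al i j - (if i = 2*j+2 then 1 else 0)

lemma e20_zero (j : ℕ) : e20 0 j = 1 := by
  rw [e20, al_zero, if_neg (by omega)]
  ring

lemma entry (i j : ℕ) (hi : 1 ≤ i) :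
    ∑ k ∈ range (i+1), (2:ℚ)^k * PowerSeries.coeff i (T^k) * bq k j = e20 i j := by
  set m := 2*j+1 with hm
  have hal : al i j = ∑ k ∈ range (i+1),
      (2:ℚ)^k * ((k+m).choose m : ℚ) * PowerSeries.coeff i (T^k) := by
    rw [al, Am, coeff_Phi _ (Nat.lt_succ_self i)]
  have hcm : ∑ k ∈ range (i+1), (((k-1).choose m : ℚ)) * PowerSeries.coeff i (T^k)
      = (if i = m+1 then 1 else 0) := by
    have h := congrArg (PowerSeries.coeff i) (Phi_cm m (by omega))
    rw [coeff_Phi _ (Nat.lt_succ_self i), PowerSeries.coeff_X_pow] at h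
    exact h
  have hterm : ∀ k ∈ range (i+1),
      (2:ℚ)^k * PowerSeries.coeff i (T^k) * bq k j
        = (2:ℚ)^k * ((k+m).choose m : ℚ) * PowerSeries.coeff i (T^k)
          - (((k-1).choose m : ℚ)) * PowerSeries.coeff i (T^k) := by
    intro k _
    rcases Nat.eq_zero_or_pos k with rfl | hk
    · have h0 : PowerSeries.coeff i ((T:R1)^0) = 0 := by
        rw [pow_zero, PowerSeries.coeff_one, if_neg (by omega)]
      rw [h0]; ring
    · rw [bq_eq k j hk]
      have h2 : ((2:ℚ)^k) ≠ 0 := by positivity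
      field_simp
      ring
  rw [Finset.sum_congr rfl hterm, Finset.sum_sub_distrib, ← hal, hcm, e20]

end Vertex20
namespace Vertex20
open PowerSeries Finset

/-- the exponent `u^i v^j` as a finsupp -/
def msn (i j : ℕ) : Fin 2 →₀ ℕ := Finsupp.single 0 i + Finsupp.single 1 j

lemma msn_apply0 (i j : ℕ) : msn i j 0 = i := by
  simp [msn, Finsupp.single_apply, show (1 : Fin 2) ≠ 0 by decide]

lemma msn_apply1 (i j : ℕ) : msn i j 1 = j := by
  simp [msn, Finsupp.single_apply, show (0 : Fin 2) ≠ 1 by decide]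

lemma d_eq_msn (d : Fin 2 →₀ ℕ) : d = msn (d 0) (d 1) := by
  have h : ∀ x, d x = msn (d 0) (d 1) x :=
    Fin.forall_fin_two.2 ⟨(msn_apply0 _ _).symm, (msn_apply1 _ _).symm⟩
  ext x
  exact h x

lemma msn_le {a b i j : ℕ} : msn a b ≤ msn i j ↔ a ≤ i ∧ b ≤ j := by
  rw [Finsupp.le_def, Fin.forall_fin_two, msn_apply0, msn_apply0, msn_apply1, msn_apply1]

lemma msn_sub {a b i j : ℕ} : msn i j - msn a b = msn (i-a) (j-b) := by
  have h : ∀ x, (msn i j - msn a b) x = msn (i-a) (j-b) x := by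
    rw [Fin.forall_fin_two]
    constructor
    · rw [Finsupp.tsub_apply, msn_apply0, msn_apply0, msn_apply0]
    · rw [Finsupp.tsub_apply, msn_apply1, msn_apply1, msn_apply1]
  ext x
  exact h x

lemma msn_eq {a b i j : ℕ} : msn i j = msn a b ↔ i = a ∧ j = b := by
  constructor
  · intro h
    constructor
    · rw [← msn_apply0 i j, h, msn_apply0]
    · rw [← msn_apply1 i j, h, msn_apply1]
  · rintro ⟨rfl, rfl⟩; rfl

lemma cf_eq (i j : ℕ) (f : PS) : cf i j f = MvPowerSeries.coeff (msn i j) f := rfl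

lemma cf_sub (i j : ℕ) (f g : PS) : cf i j (f - g) = cf i j f - cf i j g :=
  map_sub (MvPowerSeries.coeff (msn i j)) f g

lemma cf_add (i j : ℕ) (f g : PS) : cf i j (f + g) = cf i j f + cf i j g :=
  map_add (MvPowerSeries.coeff (msn i j)) f g

lemma uv_pow (a b : ℕ) : (uu^a * vv^b : PS) = MvPowerSeries.monomial (msn a b) 1 := by
  rw [uu, vv, MvPowerSeries.X_pow_eq, MvPowerSeries.X_pow_eq,
    MvPowerSeries.monomial_mul_monomial, one_mul, msn]

lemma cf_mul_mono (f : PS) (a b i j : ℕ) :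
    cf i j (f * (uu^a * vv^b)) = if a ≤ i ∧ b ≤ j then cf (i-a) (j-b) f else 0 := by
  rw [cf_eq, uv_pow, MvPowerSeries.coeff_mul_monomial]
  by_cases h : a ≤ i ∧ b ≤ j
  · rw [if_pos (msn_le.2 h), if_pos h, msn_sub, mul_one, cf_eq]
  · rw [if_neg (fun hc => h (msn_le.1 hc)), if_neg h]

lemma cf_mono (a b i j : ℕ) :
    cf i j (uu^a * vv^b : PS) = if i = a ∧ j = b then 1 else 0 := by
  rw [cf_eq, uv_pow, MvPowerSeries.coeff_monomial]
  by_cases h : i = a ∧ j = b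
  · rw [if_pos (msn_eq.2 h), if_pos h]
  · rw [if_neg (fun hc => h (msn_eq.1 hc)), if_neg h]

/-- the series `A(u,v)` -/
def A2 : PS := fun d => al (d 0) (d 1)

/-- the series `u²/(1-u²v)` -/
def U2 : PS := fun d => if d 0 = 2*(d 1) + 2 then 1 else 0

lemma cf_A2 (i j : ℕ) : cf i j A2 = al i j := by
  rw [cf_eq, MvPowerSeries.coeff_apply]
  show al (msn i j 0) (msn i j 1) = al i j
  rw [msn_apply0, msn_apply1]

lemma cf_U2 (i j : ℕ) : cf i j U2 = if i = 2*j + 2 then 1 else 0 := by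
  rw [cf_eq, MvPowerSeries.coeff_apply]
  show (if msn i j 0 = 2*(msn i j 1) + 2 then (1:ℚ) else 0) = _
  rw [msn_apply0, msn_apply1]

lemma hU2 : U2 * (1 - uu^2 * vv) = uu^2 := by
  have h1 : U2 * (1 - uu^2 * vv) = U2 - U2 * (uu^2 * vv^1) := by ring
  rw [h1]
  conv_rhs => rw [show (uu^2 : PS) = uu^2 * vv^0 by ring]
  apply MvPowerSeries.ext
  intro d
  rw [d_eq_msn d, ← cf_eq, ← cf_eq]
  rw [cf_sub, cf_mul_mono, cf_U2, cf_mono, cf_U2]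
  split_ifs <;> (try norm_num) <;> omega

lemma hA2 : A2 * ((1 - uu)^2 - vv * (1 + uu)^2) = (1 + uu)^2 := by
  have h1 : A2 * ((1 - uu)^2 - vv * (1 + uu)^2)
      = A2 - A2 * (uu^1 * vv^0) - A2 * (uu^1 * vv^0) + A2 * (uu^2 * vv^0)
        - A2 * (uu^0 * vv^1) - A2 * (uu^1 * vv^1) - A2 * (uu^1 * vv^1)
        - A2 * (uu^2 * vv^1) := by ring
  rw [h1]
  conv_rhs => rw [show ((1 + uu)^2 : PS)
      = uu^0 * vv^0 + uu^1 * vv^0 + uu^1 * vv^0 + uu^2 * vv^0 by ring]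
  apply MvPowerSeries.ext
  intro d
  rw [d_eq_msn d, ← cf_eq, ← cf_eq]
  set i := d 0 with hi
  set j := d 1 with hj
  clear_value i j
  simp only [cf_sub, cf_add]
  simp only [cf_mul_mono, cf_A2, cf_mono, Nat.sub_zero, Nat.le_zero, zero_le,
    true_and, and_true]
  cases j with
  | zero =>
    have hA1 := scalarA1 i
    norm_num
    split_ifs at hA1 ⊢ <;> try linarith
    all_goals omega
  | succ j =>
    have hA2' := scalarA2 i j
    norm_num
    split_ifs at hA2' ⊢ <;> try linarith
    all_goals omega

end Vertex20
namespace Vertex20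
open PowerSeries Finset

lemma hden : MvPowerSeries.constantCoeff
    ((1 - uu^2 * vv) * ((1 - uu)^2 - vv * (1 + uu)^2)) ≠ 0 := by
  simp [uu, vv]

lemma hEs : (A2 - U2) * ((1 - uu^2 * vv) * ((1 - uu)^2 - vv * (1 + uu)^2))
    = (1 + uu^2) * (1 + 2 * uu - uu^2) := by
  calc (A2 - U2) * ((1 - uu^2 * vv) * ((1 - uu)^2 - vv * (1 + uu)^2))
      = (A2 * ((1 - uu)^2 - vv * (1 + uu)^2)) * (1 - uu^2 * vv)
        - (U2 * (1 - uu^2 * vv)) * ((1 - uu)^2 - vv * (1 + uu)^2) := by ring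
    _ = ((1 + uu)^2) * (1 - uu^2 * vv) - uu^2 * ((1 - uu)^2 - vv * (1 + uu)^2) := by
        rw [hA2, hU2]
    _ = (1 + uu^2) * (1 + 2 * uu - uu^2) := by ring

lemma g20V_eq : g20V = A2 - U2 := by
  rw [g20V]
  have hc : ((1 - uu^2 * vv) * ((1 - uu)^2 - vv * (1 + uu)^2)) *
      ((1 - uu^2 * vv) * ((1 - uu)^2 - vv * (1 + uu)^2))⁻¹ = 1 :=
    MvPowerSeries.mul_inv_cancel _ hden
  calc (1 + uu^2) * (1 + 2 * uu - uu^2) *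
        ((1 - uu^2 * vv) * ((1 - uu)^2 - vv * (1 + uu)^2))⁻¹
      = ((A2 - U2) * ((1 - uu^2 * vv) * ((1 - uu)^2 - vv * (1 + uu)^2))) *
        ((1 - uu^2 * vv) * ((1 - uu)^2 - vv * (1 + uu)^2))⁻¹ := by rw [hEs]
    _ = (A2 - U2) * (((1 - uu^2 * vv) * ((1 - uu)^2 - vv * (1 + uu)^2)) *
        ((1 - uu^2 * vv) * ((1 - uu)^2 - vv * (1 + uu)^2))⁻¹) := by ring
    _ = A2 - U2 := by rw [hc, mul_one]

lemma cf_g20V (i j : ℕ) : cf i j g20V = e20 i j := by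
  rw [g20V_eq, cf_sub, cf_A2, cf_U2, e20]

/-- lower triangular matrix P -/
def Pm (n : ℕ) : Matrix (Fin n) (Fin n) ℚ :=
  Matrix.of fun i k => if (i:ℕ) = 0 ∧ (k:ℕ) = 0 then 1/2
    else (2:ℚ)^(k:ℕ) * PowerSeries.coeff (i:ℕ) (T^(k:ℕ))

/-- matrix B -/
def Bm (n : ℕ) : Matrix (Fin n) (Fin n) ℚ := Matrix.of fun k j => bq (k:ℕ) (j:ℕ)

lemma Pm_entry_zero {n : ℕ} (i k : Fin n) (h : (i:ℕ) < (k:ℕ)) : Pm n i k = 0 := by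
  rw [Pm, Matrix.of_apply, if_neg (by omega), coeff_T_pow_of_lt h, mul_zero]

lemma Pm_tri {n : ℕ} : (Pm n).BlockTriangular OrderDual.toDual := by
  intro i k h
  exact Pm_entry_zero i k (by exact_mod_cast OrderDual.toDual_lt_toDual.mp h)

lemma det_Pm (n : ℕ) (hn : 1 ≤ n) :
    (Pm n).det = 2^(∑ l ∈ range n, l) / 2 := by
  rw [Matrix.det_of_lowerTriangular _ Pm_tri]
  have hdiag : ∀ i : Fin n, Pm n i i = (if (i:ℕ) = 0 then (1/2 : ℚ) else 1) * 2^(i:ℕ) := by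
    intro i
    rw [Pm, Matrix.of_apply, coeff_T_pow_self]
    by_cases h : (i:ℕ) = 0
    · rw [if_pos ⟨h, h⟩, if_pos h, h]; norm_num
    · rw [if_neg (by omega), if_neg h, mul_one, one_mul]
  rw [Finset.prod_congr rfl (fun i _ => hdiag i), Finset.prod_mul_distrib,
    Finset.prod_pow_eq_pow_sum, Fin.sum_univ_eq_sum_range (fun l => l) n]
  have hhalf : (∏ i : Fin n, (if (i:ℕ) = 0 then (1/2 : ℚ) else 1)) = 1/2 := by
    rw [Finset.prod_eq_single (⟨0, hn⟩ : Fin n)]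
    · norm_num
    · intro k _ hk
      rw [if_neg]
      intro hc
      exact hk (Fin.ext hc)
    · intro h; exact absurd (Finset.mem_univ _) h
  rw [hhalf]
  ring

lemma CPB (n : ℕ) (hn : 1 ≤ n) :
    (Matrix.of fun i j : Fin n => cf (i:ℕ) (j:ℕ) g20V) = Pm n * Bm n := by
  ext i j
  rw [Matrix.of_apply, Matrix.mul_apply, cf_g20V]
  rcases Nat.eq_zero_or_pos (i:ℕ) with hi | hi
  · -- row 0
    rw [hi, e20_zero]
    rw [Finset.sum_eq_single (⟨0, hn⟩ : Fin n)]
    · have h0 : ((⟨0, hn⟩ : Fin n) : ℕ) = 0 := rfl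
      rw [Pm, Bm, Matrix.of_apply, Matrix.of_apply, h0, if_pos ⟨hi, rfl⟩, bq_zero]
      try norm_num
    · intro k _ hk
      have hk0 : (k:ℕ) ≠ 0 := fun hc => hk (Fin.ext hc)
      rw [Pm, Matrix.of_apply, if_neg (by omega), hi,
        coeff_T_pow_of_lt (by omega)]
      ring
    · intro h; exact absurd (Finset.mem_univ _) h
  · -- rows ≥ 1
    have hPm : ∀ k : Fin n, Pm n i k * Bm n k j
        = (2:ℚ)^(k:ℕ) * PowerSeries.coeff (i:ℕ) (T^(k:ℕ)) * bq (k:ℕ) (j:ℕ) := by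
      intro k
      rw [Pm, Bm, Matrix.of_apply, Matrix.of_apply, if_neg (by omega)]
    rw [Finset.sum_congr rfl (fun k _ => hPm k),
      Fin.sum_univ_eq_sum_range
        (fun t => (2:ℚ)^t * PowerSeries.coeff (i:ℕ) (T^t) * bq t (j:ℕ)) n,
      ← entry (i:ℕ) (j:ℕ) hi]
    apply Finset.sum_subset
    · rw [Finset.range_subset_range]
      exact i.isLt
    · intro t _ ht
      rw [Finset.mem_range] at ht
      rw [coeff_T_pow_of_lt (by omega), mul_zero, zero_mul]

lemma detC (n : ℕ) (hn : 1 ≤ n) :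
    (Matrix.of fun i j : Fin n => cf (i:ℕ) (j:ℕ) g20V).det
      = 2^(∑ l ∈ range n, l) / 2 * (Bm n).det := by
  rw [CPB n hn, Matrix.det_mul, det_Pm n hn]

end Vertex20
namespace Vertex20
open PowerSeries Finset

lemma rpow_half_nat (N : ℕ) : (2:ℝ) ^ (((N:ℕ):ℝ)/2) = Real.sqrt 2 ^ N := by
  rw [Real.sqrt_eq_rpow, ← Real.rpow_natCast ((2:ℝ) ^ ((1:ℝ)/2)) N,
    ← Real.rpow_mul (by norm_num : (0:ℝ) ≤ 2)]
  congr 1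
  ring

lemma theta_entry (i j : ℕ) :
    theta (2*j+1) ((i:ℕ):ℝ) + theta (2*j+1) (-((i:ℕ):ℝ))
      = (2:ℝ) ^ (((i:ℕ):ℝ)/2) * ((bq i j : ℚ) : ℝ) := by
  have hneg : (2:ℝ) ^ ((-((i:ℕ):ℝ))/2) = (2:ℝ) ^ (((i:ℕ):ℝ)/2) / (2:ℝ)^(i:ℕ) := by
    rw [← Real.rpow_natCast 2 i, ← Real.rpow_sub (by norm_num : (0:ℝ) < 2)]
    congr 1
    ring
  have hprod : ∏ k ∈ range (2*j+1), (-((i:ℕ):ℝ) + (k:ℝ) + 1)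
      = ∏ k ∈ range (2*j+1), ((k:ℝ) + 1 - (i:ℕ)) :=
    Finset.prod_congr rfl fun k _ => by ring
  rw [theta, theta, hneg, hprod, bq]
  push_cast
  have hfac : ((2*j+1).factorial : ℝ) ≠ 0 := by
    exact_mod_cast (2*j+1).factorial_ne_zero
  have h2i : ((2:ℝ)^(i:ℕ)) ≠ 0 := by positivity
  field_simp

theorem main_det (n : ℕ) (hn : 1 ≤ n) :
    ((Matrix.det (Matrix.of fun i j : Fin n => cf i j g20V) : ℚ) : ℝ) =
      (2 : ℝ) ^ (((n * (n - 1) : ℕ) : ℝ) / 4) / 2 *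
        Matrix.det (Matrix.of fun i j : Fin n =>
          theta (2 * (j : ℕ) + 1) ((i : ℕ) : ℝ)
            + theta (2 * (j : ℕ) + 1) (-((i : ℕ) : ℝ))) := by
  classical
  set Tn := ∑ l ∈ range n, l with hTn
  -- rewrite the theta matrix
  have hθ : (Matrix.of fun i j : Fin n =>
        theta (2 * (j : ℕ) + 1) ((i : ℕ) : ℝ)
          + theta (2 * (j : ℕ) + 1) (-((i : ℕ) : ℝ)))
      = Matrix.of fun i j : Fin n =>
          (2:ℝ) ^ (((i:ℕ):ℝ)/2) * (((Bm n).map (fun q : ℚ => (q:ℝ))) i j) := by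
    ext i j
    rw [Matrix.of_apply, Matrix.of_apply, theta_entry (i:ℕ) (j:ℕ)]
    rfl
  rw [hθ, Matrix.det_mul_column]
  have hBr : ((Bm n).map (fun q : ℚ => (q:ℝ))).det = (((Bm n).det : ℚ) : ℝ) :=
    ((Rat.castHom ℝ).map_det (Bm n)).symm
  rw [hBr]
  -- the product of the row factors
  have hprod : (∏ i : Fin n, (2:ℝ) ^ (((i:ℕ):ℝ)/2)) = Real.sqrt 2 ^ Tn := by
    rw [Finset.prod_congr rfl (fun (i : Fin n) _ => rpow_half_nat (i:ℕ)),
      Finset.prod_pow_eq_pow_sum, Fin.sum_univ_eq_sum_range (fun l => l) n]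
  rw [hprod]
  -- the prefactor
  have hpre : (2 : ℝ) ^ (((n * (n - 1) : ℕ) : ℝ) / 4) = Real.sqrt 2 ^ Tn := by
    have h2T : n * (n - 1) = Tn * 2 := (Finset.sum_range_id_mul_two n).symm
    rw [h2T, ← rpow_half_nat Tn]
    congr 1
    push_cast
    ring
  rw [hpre]
  -- LHS
  rw [detC n hn]
  push_cast
  rw [← hTn, hBr]
  have hss : Real.sqrt 2 ^ Tn * Real.sqrt 2 ^ Tn = (2:ℝ) ^ Tn := by
    rw [← mul_pow, Real.mul_self_sqrt (by norm_num : (0:ℝ) ≤ 2)]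
  calc (2:ℝ)^Tn / 2 * (((Bm n).det : ℚ) : ℝ)
      = (Real.sqrt 2 ^ Tn * Real.sqrt 2 ^ Tn) / 2 * (((Bm n).det : ℚ) : ℝ) := by rw [hss]
    _ = Real.sqrt 2 ^ Tn / 2 * (Real.sqrt 2 ^ Tn * (((Bm n).det : ℚ) : ℝ)) := by ring

end Vertex20

/-- The symmetric determinant formula:
`det_{0≤i,j≤n-1}( g_20V|_{u^i v^j} ) = (2^{n(n-1)/4}/2)·det_{0≤i,j≤n-1}(θ_{2j+1}(i) + θ_{2j+1}(-i))`. -/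
theorem det_g20V_eq_theta_det (n : ℕ) (hn : 1 ≤ n) :
    ((Matrix.det (Matrix.of fun i j : Fin n => cf i j g20V) : ℚ) : ℝ) =
      (2 : ℝ) ^ (((n * (n - 1) : ℕ) : ℝ) / 4) / 2 *
        Matrix.det (Matrix.of fun i j : Fin n =>
          theta (2 * (j : ℕ) + 1) ((i : ℕ) : ℝ) + theta (2 * (j : ℕ) + 1) (-((i : ℕ) : ℝ))) :=
  Vertex20.main_det n hn
end
end
end

section
/- For every n ≥ 2, Z_{n,n−1}^DT = Z_{n−1}^DT; that is, the number of n-tuples of pairwise non-intersecting Schröder paths (π_i from (0,2i) to (2i+1,2i+1)) whose topmost path π_{n−1} first reaches the line x + y = 4n−2 at its topmost accessible point (n, 3n−2) equals the total number Z_{n−1}^DT of such (n−1)-tuples. -/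
noncomputable section

/-- The first visited point of the path `p` on the line `x + y = c` is `pt`:
`p` splits as `l₁ ++ pt :: l₂` where no point of `l₁` lies on the line. -/
def FirstVisit (p : List (ℤ × ℤ)) (c : ℤ) (pt : ℤ × ℤ) : Prop :=
  ∃ l₁ l₂ : List (ℤ × ℤ), p = l₁ ++ pt :: l₂ ∧ ∀ x ∈ l₁, x.1 + x.2 ≠ c

/-- `Z_{n,k}^DT`: the number of `n`-tuples of pairwise non-intersecting Schröder paths
(`π_i` from `(0,2i)` to `(2i+1,2i+1)`) whose top path `π_{n-1}` first visits the line
`x + y = 4n-2` at the point `(2n-1-k, 2n-1+k)`. -/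
def ZDTref (n k : ℕ) : ℕ :=
  Nat.card {π : Fin n → List (ℤ × ℤ) //
    (∀ i : Fin n,
      π i ∈ SchroderPaths (0, 2 * (i : ℤ)) (2 * (i : ℤ) + 1, 2 * (i : ℤ) + 1)) ∧
    (∀ i j : Fin n, i ≠ j → List.Disjoint (π i) (π j)) ∧
    ∀ i : Fin n, (i : ℕ) = n - 1 →
      FirstVisit (π i) (4 * (n : ℤ) - 2)
        (2 * (n : ℤ) - 1 - (k : ℤ), 2 * (n : ℤ) - 1 + (k : ℤ))}

/-- `Z_n^DT`: the number of `n`-tuples of pairwise non-intersecting Schröder paths,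
the `i`-th running from `(0, 2i)` to `(2i+1, 2i+1)`. -/
def ZDT (n : ℕ) : ℕ :=
  Nat.card {π : Fin n → List (ℤ × ℤ) //
    (∀ i : Fin n,
      π i ∈ SchroderPaths (0, 2 * (i : ℤ)) (2 * (i : ℤ) + 1, 2 * (i : ℤ) + 1)) ∧
    ∀ i j : Fin n, i ≠ j → List.Disjoint (π i) (π j)}

namespace ZDTaux
open List

lemma step_comp {a b : ℤ × ℤ} (h : SchroderStep a b) :
    (b.1 - a.1 = 1 ∧ b.2 - a.2 = 1) ∨ (b.1 - a.1 = 1 ∧ b.2 - a.2 = -1) ∨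
      (b.1 - a.1 = 2 ∧ b.2 - a.2 = 0) := by
  rcases h with h | h | h
  · exact Or.inl ⟨by simpa using congrArg Prod.fst h, by simpa using congrArg Prod.snd h⟩
  · exact Or.inr (Or.inl ⟨by simpa using congrArg Prod.fst h, by simpa using congrArg Prod.snd h⟩)
  · exact Or.inr (Or.inr ⟨by simpa using congrArg Prod.fst h, by simpa using congrArg Prod.snd h⟩)

lemma step_of_comp {a b : ℤ × ℤ} (h1 : b.1 - a.1 = 1) (h2 : b.2 - a.2 = 1) :
    SchroderStep a b := by
  left
  obtain ⟨a1, a2⟩ := a; obtain ⟨b1, b2⟩ := b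
  simp only [Prod.mk_sub_mk, Prod.mk.injEq] at *
  omega

lemma step_of_comp' {a b : ℤ × ℤ} (h1 : b.1 - a.1 = 1) (h2 : b.2 - a.2 = -1) :
    SchroderStep a b := by
  right; left
  obtain ⟨a1, a2⟩ := a; obtain ⟨b1, b2⟩ := b
  simp only [Prod.mk_sub_mk, Prod.mk.injEq] at *
  omega

lemma pairwise_sum {p : List (ℤ × ℤ)} (hp : IsSchroderPath p) :
    p.Pairwise (fun a b => a.1 + a.2 ≤ b.1 + b.2) := by
  haveI : IsTrans (ℤ × ℤ) (fun a b => a.1 + a.2 ≤ b.1 + b.2) :=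
    ⟨fun _ _ _ h1 h2 => le_trans h1 h2⟩
  exact List.isChain_iff_pairwise.mp (hp.imp (fun a b h => by rcases step_comp h with ⟨h1,h2⟩|⟨h1,h2⟩|⟨h1,h2⟩ <;> omega))

lemma pairwise_diff {p : List (ℤ × ℤ)} (hp : IsSchroderPath p) :
    p.Pairwise (fun a b => b.2 - b.1 ≤ a.2 - a.1) := by
  haveI : IsTrans (ℤ × ℤ) (fun a b => b.2 - b.1 ≤ a.2 - a.1) :=
    ⟨fun _ _ _ h1 h2 => le_trans h2 h1⟩
  exact List.isChain_iff_pairwise.mp (hp.imp (fun a b h => by rcases step_comp h with ⟨h1,h2⟩|⟨h1,h2⟩|⟨h1,h2⟩ <;> omega))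

/-- From head: every member satisfies relation from head (or equals head). -/
lemma head_rel {α : Type*} {R : α → α → Prop} {p : List α} {a : α}
    (hp : p.Pairwise R) (hh : p.head? = some a) : ∀ x ∈ p, x = a ∨ R a x := by
  cases p with
  | nil => simp at hh
  | cons c t =>
      have hca : c = a := by simpa using hh
      subst hca
      intro x hx
      rcases List.mem_cons.mp hx with rfl | hx
      · exact Or.inl rfl
      · exact Or.inr ((List.pairwise_cons.mp hp).1 x hx)

lemma last_rel {α : Type*} {R : α → α → Prop} {p : List α} {b : α}
    (hp : p.Pairwise R) (hl : p.getLast? = some b) : ∀ x ∈ p, x = b ∨ R x b := by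
  have hne : p ≠ [] := by rintro rfl; simp at hl
  have hdec : p.dropLast ++ [p.getLast hne] = p := List.dropLast_append_getLast hne
  have hb : p.getLast hne = b := by
    have := List.getLast?_eq_getLast hne ▸ hl
    simpa using this
  rw [hb] at hdec
  intro x hx
  rw [← hdec] at hx hp
  rcases List.mem_append.mp hx with hx | hx
  · exact Or.inr ((List.pairwise_append.mp hp).2.2 x hx b (by simp))
  · simp at hx; exact Or.inl hx

lemma mem_facts {p : List (ℤ × ℤ)} {a b : ℤ × ℤ} (hp : p ∈ SchroderPaths a b) :
    ∀ x ∈ p, a.1 + a.2 ≤ x.1 + x.2 ∧ x.1 + x.2 ≤ b.1 + b.2 ∧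
      x.2 - x.1 ≤ a.2 - a.1 ∧ b.2 - b.1 ≤ x.2 - x.1 := by
  obtain ⟨hc, hh, hl⟩ := hp
  intro x hx
  have h1 := head_rel (pairwise_sum hc) hh x hx
  have h2 := last_rel (pairwise_sum hc) hl x hx
  have h3 := head_rel (pairwise_diff hc) hh x hx
  have h4 := last_rel (pairwise_diff hc) hl x hx
  refine ⟨?_, ?_, ?_, ?_⟩
  · rcases h1 with rfl | h1; · omega
    · exact h1
  · rcases h2 with rfl | h2; · omega
    · exact h2
  · rcases h3 with rfl | h3; · omega
    · exact h3
  · rcases h4 with rfl | h4; · omega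
    · exact h4

lemma up_list : ∀ (q : List (ℤ × ℤ)) (a : ℤ × ℤ), q.Chain' SchroderStep →
    (∀ x ∈ q, x.2 - x.1 = a.2 - a.1) → q.head? = some a →
    q = (List.range q.length).map (fun j : ℕ => (a.1 + (j : ℤ), a.2 + (j : ℤ))) := by
  intro q
  induction q with
  | nil => intro a _ _ hh; simp at hh
  | cons c t ih =>
    intro a hc hd hh
    have hca : c = a := by simpa using hh
    subst hca
    cases t with
    | nil => simp [List.range_succ]
    | cons b t' =>
      have hstep : SchroderStep c b := (List.isChain_cons_cons.mp hc).1
      have hdb : b.2 - b.1 = c.2 - c.1 := hd b (by simp)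
      have hb : b = (c.1 + 1, c.2 + 1) := by
        obtain ⟨b1, b2⟩ := b
        rcases step_comp hstep with ⟨h1, h2⟩ | ⟨h1, h2⟩ | ⟨h1, h2⟩ <;>
          simp only [Prod.mk.injEq] <;> simp at h1 h2 hdb <;> omega
      have iht := ih b (List.isChain_cons_cons.mp hc).2
        (fun x hx => by rw [hd x (by simp [hx]), hb]; simp)
        rfl
      have hL : (b :: t').length = t'.length + 1 := by simp
      show c :: b :: t' = List.map _ (List.range (t'.length + 1 + 1))
      rw [List.range_succ_eq_map, List.map_cons, List.map_map]
      congr 1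
      · simp
      · rw [iht, hL]
        apply List.map_congr_left
        intro j _
        simp only [Function.comp_apply, hb]
        simp only [Prod.mk.injEq]
        constructor <;> push_cast <;> ring

lemma down_list : ∀ (q : List (ℤ × ℤ)) (a : ℤ × ℤ), q.Chain' SchroderStep →
    (∀ x ∈ q, x.1 + x.2 = a.1 + a.2) → q.head? = some a →
    q = (List.range q.length).map (fun j : ℕ => (a.1 + (j : ℤ), a.2 - (j : ℤ))) := by
  intro q
  induction q with
  | nil => intro a _ _ hh; simp at hh
  | cons c t ih =>
    intro a hc hd hh
    have hca : c = a := by simpa using hh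
    subst hca
    cases t with
    | nil => simp [List.range_succ]
    | cons b t' =>
      have hstep : SchroderStep c b := (List.isChain_cons_cons.mp hc).1
      have hdb : b.1 + b.2 = c.1 + c.2 := hd b (by simp)
      have hb : b = (c.1 + 1, c.2 - 1) := by
        obtain ⟨b1, b2⟩ := b
        rcases step_comp hstep with ⟨h1, h2⟩ | ⟨h1, h2⟩ | ⟨h1, h2⟩ <;>
          simp only [Prod.mk.injEq] <;> simp at h1 h2 hdb <;> omega
      have iht := ih b (List.isChain_cons_cons.mp hc).2
        (fun x hx => by rw [hd x (by simp [hx]), hb]; simp)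
        rfl
      have hL : (b :: t').length = t'.length + 1 := by simp
      show c :: b :: t' = List.map _ (List.range (t'.length + 1 + 1))
      rw [List.range_succ_eq_map, List.map_cons, List.map_map]
      congr 1
      · simp
      · rw [iht, hL]
        apply List.map_congr_left
        intro j _
        simp only [Function.comp_apply, hb]
        simp only [Prod.mk.injEq]
        constructor <;> push_cast <;> ring

/-- The forced top path. -/
def upF (n : ℕ) (j : ℕ) : ℤ × ℤ := ((j : ℤ), 2 * (n : ℤ) - 2 + (j : ℤ))
def dnF (n : ℕ) (j : ℕ) : ℤ × ℤ := ((n : ℤ) + (j : ℤ), 3 * (n : ℤ) - 2 - (j : ℤ))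

def Fpath (n : ℕ) : List (ℤ × ℤ) :=
  ((List.range n).map (upF n)) ++ ((List.range n).map (dnF n))

end ZDTaux

namespace ZDTaux
open List

lemma range_map_getLast? {α : Type*} (f : ℕ → α) (m : ℕ) :
    ((List.range (m + 1)).map f).getLast? = some (f m) := by
  rw [List.range_succ, List.map_append]
  simp

lemma Fpath_chain {n : ℕ} (hn : 2 ≤ n) : (Fpath n).Chain' SchroderStep := by
  obtain ⟨m, rfl⟩ : ∃ m, n = m + 2 := ⟨n - 2, by omega⟩
  rw [Fpath]; unfold List.Chain'; rw [List.isChain_append]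
  refine ⟨?_, ?_, ?_⟩
  · rw [List.isChain_map]
    exact (List.isChain_range_succ _ (m + 1)).mpr fun j hj =>
      step_of_comp (by simp only [upF]; push_cast; ring) (by simp only [upF]; push_cast; ring)
  · rw [List.isChain_map]
    exact (List.isChain_range_succ _ (m + 1)).mpr fun j hj =>
      step_of_comp' (by simp only [dnF]; push_cast; ring) (by simp only [dnF]; push_cast; ring)
  · have hhead : ((List.range (m + 2)).map (dnF (m + 2))).head? = some (dnF (m + 2) 0) := by
      rw [List.range_succ_eq_map]
      simp
    rw [range_map_getLast?, hhead]
    intro x hx y hy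
    simp at hx hy
    subst hx; subst hy
    exact step_of_comp (by simp only [upF, dnF]; push_cast; ring)
      (by simp only [upF, dnF]; push_cast; ring)

lemma Fpath_mem {n : ℕ} (hn : 2 ≤ n) :
    Fpath n ∈ SchroderPaths ((0 : ℤ), 2 * (n : ℤ) - 2) (2 * (n : ℤ) - 1, 2 * (n : ℤ) - 1) := by
  refine ⟨Fpath_chain hn, ?_, ?_⟩
  · obtain ⟨m, rfl⟩ : ∃ m, n = m + 2 := ⟨n - 2, by omega⟩
    rw [Fpath, List.head?_append]
    simp [List.range_succ_eq_map, upF]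
  · obtain ⟨m, rfl⟩ : ∃ m, n = m + 2 := ⟨n - 2, by omega⟩
    rw [Fpath, List.getLast?_append, range_map_getLast?]
    simp [dnF, Prod.ext_iff]
    constructor <;> push_cast <;> ring

lemma Fpath_fv {n : ℕ} (hn : 2 ≤ n) :
    FirstVisit (Fpath n) (4 * (n : ℤ) - 2) ((n : ℤ), 3 * (n : ℤ) - 2) := by
  refine ⟨(List.range n).map (upF n), (List.range (n - 1)).map (fun j => dnF n (j + 1)), ?_, ?_⟩
  · rw [Fpath]
    congr 1
    obtain ⟨m, rfl⟩ : ∃ m, n = m + 1 := ⟨n - 1, by omega⟩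
    rw [List.range_succ_eq_map, List.map_cons, List.map_map]
    congr 1 <;> simp [dnF]
  · intro x hx
    simp [upF] at hx
    obtain ⟨j, hj, rfl⟩ := hx
    have hj' : (j : ℤ) < (n : ℤ) := by exact_mod_cast hj
    simp
    omega

lemma mem_Fpath {n : ℕ} {x : ℤ × ℤ} (hx : x ∈ Fpath n) :
    x.2 - x.1 = 2 * (n : ℤ) - 2 ∨ x.1 + x.2 = 4 * (n : ℤ) - 2 := by
  rw [Fpath, List.mem_append] at hx
  rcases hx with hx | hx
  · obtain ⟨j, hj, rfl⟩ := List.mem_map.mp hx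
    left; simp only [upF]; ring
  · obtain ⟨j, hj, rfl⟩ := List.mem_map.mp hx
    right; simp only [dnF]; ring

lemma disj_F {n : ℕ} {c : ℤ} (hc : c ≤ (n : ℤ) - 2) {q : List (ℤ × ℤ)}
    (hq : q ∈ SchroderPaths ((0 : ℤ), 2 * c) (2 * c + 1, 2 * c + 1)) :
    q.Disjoint (Fpath n) := by
  intro x hxq hxF
  have h := mem_facts hq x hxq
  simp at h
  rcases mem_Fpath hxF with h2 | h2 <;> omega

end ZDTaux

namespace ZDTaux
open List

lemma forced_eq {n : ℕ} (hn : 2 ≤ n) {p : List (ℤ × ℤ)}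
    (hp : p ∈ SchroderPaths ((0 : ℤ), 2 * (n : ℤ) - 2) (2 * (n : ℤ) - 1, 2 * (n : ℤ) - 1))
    (hfv : FirstVisit p (4 * (n : ℤ) - 2) ((n : ℤ), 3 * (n : ℤ) - 2)) : p = Fpath n := by
  obtain ⟨l₁, l₂, rfl, hoff⟩ := hfv
  set pt : ℤ × ℤ := ((n : ℤ), 3 * (n : ℤ) - 2) with hpt
  obtain ⟨hchain, hhead, hlast⟩ := hp
  have hmem := mem_facts (⟨hchain, hhead, hlast⟩ :
    l₁ ++ pt :: l₂ ∈ SchroderPaths ((0 : ℤ), 2 * (n : ℤ) - 2) (2 * (n : ℤ) - 1, 2 * (n : ℤ) - 1))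
  have pd := List.pairwise_append.mp (pairwise_diff hchain)
  have ps := List.pairwise_append.mp (pairwise_sum hchain)
  -- every point of l₁ ++ [pt] has y - x = 2n - 2
  have hd1 : ∀ x ∈ l₁ ++ [pt], x.2 - x.1 = 2 * (n : ℤ) - 2 - 0 := by
    intro x hx
    rcases List.mem_append.mp hx with hx | hx
    · have h1 := (hmem x (List.mem_append_left _ hx)).2.2.1
      have h2 := pd.2.2 x hx pt (List.mem_cons_self)
      simp only [hpt] at h2 ⊢
      simp at h1 h2 ⊢
      omega
    · simp at hx
      subst hx
      simp [hpt]
      ring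
  -- the first segment is a chain
  have hq1 : (l₁ ++ [pt]).Chain' SchroderStep := by
    have he : l₁ ++ pt :: l₂ = (l₁ ++ [pt]) ++ l₂ := by simp
    rw [he] at hchain
    exact hchain.left_of_append
  have hh1 : (l₁ ++ [pt]).head? = some ((0 : ℤ), 2 * (n : ℤ) - 2) := by
    rw [List.head?_append] at hhead ⊢
    simpa using hhead
  have hup := up_list (l₁ ++ [pt]) ((0 : ℤ), 2 * (n : ℤ) - 2) hq1 hd1 hh1
  -- length of l₁ is n
  have hlast1 : (l₁ ++ [pt]).getLast? = some pt := List.getLast?_concat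
  rw [hup, List.length_append, List.length_singleton, range_map_getLast?] at hlast1
  have hl1len : l₁.length = n := by
    have h1 : (0 : ℤ) + (l₁.length : ℤ) = (n : ℤ) := congrArg Prod.fst (Option.some_injective _ hlast1)
    have : (l₁.length : ℤ) = (n : ℤ) := by omega
    exact_mod_cast this
  have hl1 : l₁ = (List.range n).map (upF n) := by
    have hdl : l₁ = (l₁ ++ [pt]).dropLast := (List.dropLast_concat).symm
    rw [hup, List.length_append, List.length_singleton, hl1len, List.range_succ,
      List.map_append, List.map_cons, List.map_nil, List.dropLast_concat] at hdl
    rw [hdl]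
    exact List.map_congr_left fun j _ => by simp [upF]
  -- second segment
  have hq2 : (pt :: l₂).Chain' SchroderStep := hchain.right_of_append
  have hs2 : ∀ y ∈ pt :: l₂, y.1 + y.2 = pt.1 + pt.2 := by
    intro y hy
    rcases List.mem_cons.mp hy with rfl | hy
    · rfl
    · have h1 := (hmem y (List.mem_append_right _ (List.mem_cons_of_mem _ hy))).2.1
      have h2 := (List.pairwise_cons.mp ps.2.1).1 y hy
      simp [hpt] at h1 h2 ⊢
      omega
  have hdown := down_list (pt :: l₂) pt hq2 hs2 rfl
  have hlast2 : (pt :: l₂).getLast? = some (2 * (n : ℤ) - 1, 2 * (n : ℤ) - 1) := by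
    rw [List.getLast?_append] at hlast
    cases h : (pt :: l₂).getLast? with
    | none => simp at h
    | some v => rw [h] at hlast; simpa using hlast
  rw [hdown, List.length_cons, range_map_getLast?] at hlast2
  have hl2len : l₂.length = n - 1 := by
    have h1 : pt.1 + (l₂.length : ℤ) = 2 * (n : ℤ) - 1 :=
      congrArg Prod.fst (Option.some_injective _ hlast2)
    simp [hpt] at h1
    have h2 : (l₂.length : ℤ) = (n : ℤ) - 1 := by omega
    omega
  have hl2 : pt :: l₂ = (List.range n).map (dnF n) := by
    rw [hdown, List.length_cons, hl2len, show n - 1 + 1 = n from by omega]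
    exact List.map_congr_left fun j _ => by simp [dnF, hpt]
  rw [hl1, hl2]
  rfl

end ZDTaux

/-- The topmost refined count equals the full count one size down:
`Z_{n,n-1}^DT = Z_{n-1}^DT`. -/
theorem ZDTref_top_eq_ZDT_pred (n : ℕ) (hn : 2 ≤ n) :
    ZDTref n (n - 1) = ZDT (n - 1) := by
  have h1n : 1 ≤ n := by omega
  have hc : ((n - 1 : ℕ) : ℤ) = (n : ℤ) - 1 := by push_cast [h1n]; ring
  have e1 : ((0 : ℤ), 2 * ((n : ℤ) - 1)) = ((0 : ℤ), 2 * (n : ℤ) - 2) := by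
    rw [Prod.mk.injEq]; constructor <;> ring
  have e2 : (2 * ((n : ℤ) - 1) + 1, 2 * ((n : ℤ) - 1) + 1) =
      (2 * (n : ℤ) - 1, 2 * (n : ℤ) - 1) := by
    rw [Prod.mk.injEq]; constructor <;> ring
  have ept : (2 * (n : ℤ) - 1 - ((n - 1 : ℕ) : ℤ), 2 * (n : ℤ) - 1 + ((n - 1 : ℕ) : ℤ)) =
      ((n : ℤ), 3 * (n : ℤ) - 2) := by
    rw [Prod.mk.injEq]; constructor <;> rw [hc] <;> ring
  unfold ZDTref ZDT
  refine Nat.card_congr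
    { toFun := fun π => ⟨fun i => π.1 ⟨i, lt_of_lt_of_le i.isLt (by omega)⟩, ?_, ?_⟩
      invFun := fun σ =>
        ⟨fun i => if h : (i : ℕ) < n - 1 then σ.1 ⟨i, h⟩ else ZDTaux.Fpath n, ?_, ?_, ?_⟩
      left_inv := ?_
      right_inv := ?_ }
  · intro i
    exact π.2.1 _
  · intro i j hij
    refine π.2.2.1 _ _ fun h => hij ?_
    simp only [Fin.mk.injEq] at h
    exact Fin.ext h
  · intro i
    by_cases h : (i : ℕ) < n - 1
    · simp only [dif_pos h]
      exact σ.2.1 _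
    · simp only [dif_neg h]
      have hi : ((i : ℕ) : ℤ) = (n : ℤ) - 1 := by
        have : (i : ℕ) = n - 1 := by omega
        rw [this, hc]
      rw [hi, e1, e2]
      exact ZDTaux.Fpath_mem hn
  · intro i j hij
    have hbnd : ∀ m : Fin n, (m : ℕ) < n - 1 → ((m : ℕ) : ℤ) ≤ (n : ℤ) - 2 := by
      intro m hm; omega
    by_cases hi : (i : ℕ) < n - 1 <;> by_cases hj : (j : ℕ) < n - 1
    · simp only [dif_pos hi, dif_pos hj]
      refine σ.2.2 _ _ fun h => hij ?_
      simp only [Fin.mk.injEq] at h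
      exact Fin.ext h
    · simp only [dif_pos hi, dif_neg hj]
      exact ZDTaux.disj_F (hbnd i hi) (σ.2.1 ⟨i, hi⟩)
    · simp only [dif_neg hi, dif_pos hj]
      exact fun a ha hb => ZDTaux.disj_F (hbnd j hj) (σ.2.1 ⟨j, hj⟩) hb ha
    · exact absurd (Fin.ext (show (i : ℕ) = (j : ℕ) by omega)) hij
  · intro i hi
    have hnot : ¬ ((i : ℕ) < n - 1) := by omega
    simp only [dif_neg hnot]
    rw [ept]
    exact ZDTaux.Fpath_fv hn
  · intro π
    apply Subtype.ext
    funext i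
    show (if h : (i : ℕ) < n - 1 then π.1 ⟨(i : ℕ), _⟩ else ZDTaux.Fpath n) = π.1 i
    by_cases h : (i : ℕ) < n - 1
    · rw [dif_pos h]
    · rw [dif_neg h]
      have hi : (i : ℕ) = n - 1 := by omega
      have hicast : ((i : ℕ) : ℤ) = (n : ℤ) - 1 := by rw [hi, hc]
      have hmem := π.2.1 i
      rw [hicast, e1, e2] at hmem
      have hfv := π.2.2.2 i hi
      simp only [ept] at hfv
      exact (ZDTaux.forced_eq hn hmem hfv).symm
  · intro σ
    apply Subtype.ext
    funext i
    show (if h : ((⟨(i : ℕ), _⟩ : Fin n) : ℕ) < n - 1 then σ.1 ⟨(i : ℕ), _⟩ else ZDTaux.Fpath n)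
      = σ.1 i
    rw [dif_pos i.isLt]
end
end
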